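/- arXiv:1401.5114 — 6 statements merged into one kernel-verified Lean document; each statement's English description precedes it below -/
import Mathlib

section
/- Let D be a commutative ring. Suppose that to each s ∈ E_d there is assigned a monic cubic polynomial p_s(x) = x³ + c_{s,2}x² + c_{s,1}x + c_{s,0} ∈ D[x] whose constant term c_{s,0} is invertible in D, and let A = D F_d / ⟨p_s(s) : s ∈ E_d⟩ be the quotient of the group algebra D F_d by the two-sided ideal generated by the elements p_s(s) for s ∈ E_d. Then A is spanned as a D-module by the image of M_d; that is, the D-linear span of the image of M_d under the quotient map D F_d → A is all of A. -/
open scoped Pointwise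

/-- The generator `y_{i+1}` of the free group of rank `d` (0-indexed: `ygen d i` for
`i < d`; junk value `1` otherwise). -/
def ygen (d : ℕ) (i : ℕ) : FreeGroup (Fin d) :=
  if h : i < d then FreeGroup.of ⟨i, h⟩ else 1

/-- The pair of recursively defined subsets `(E_{s+1}, M_{s+1})` of the free group of
rank `d` (0-indexed, so `EM d s` is the paper's `(E_{s+1}, M_{s+1})`):
`E₁ = {y₁}`, `M₁ = {e, y₁, y₁⁻¹}`, and
`E_{s+1} = E_s ∪ M_s·y_{s+1}^{±1}`,
`M_{s+1} = M_s ∪ M_s·y_{s+1}^{±1}·M_s ∪ M_s·y_{s+1}⁻¹·(M_s \ {e})·y_{s+1}·M_s`. -/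
def EM (d : ℕ) : ℕ → Set (FreeGroup (Fin d)) × Set (FreeGroup (Fin d))
  | 0 => ({ygen d 0}, {1, ygen d 0, (ygen d 0)⁻¹})
  | s + 1 =>
      let E := (EM d s).1
      let M := (EM d s).2
      (E ∪ M * {ygen d (s + 1), (ygen d (s + 1))⁻¹},
        M ∪ M * {ygen d (s + 1), (ygen d (s + 1))⁻¹} * M ∪
          M * {(ygen d (s + 1))⁻¹} * (M \ {1}) * {ygen d (s + 1)} * M)

/-- The relation imposing on each `s ∈ E_d` the monic cubic polynomial condition
`s³ + c₂(s)·s² + c₁(s)·s + c₀(s) = 0` in the group algebra `D F_d`. -/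
def cubicRel (D : Type*) [CommRing D] (d : ℕ) (c2 c1 c0 : FreeGroup (Fin d) → D)
    (p q : MonoidAlgebra D (FreeGroup (Fin d))) : Prop :=
  ∃ s ∈ (EM d (d - 1)).1,
    p = (MonoidAlgebra.of D (FreeGroup (Fin d)) s) ^ 3 +
          c2 s • (MonoidAlgebra.of D (FreeGroup (Fin d)) s) ^ 2 +
          c1 s • MonoidAlgebra.of D (FreeGroup (Fin d)) s + c0 s • 1 ∧
      q = 0

set_option linter.unusedSectionVars false
set_option linter.unnecessarySimpa false

namespace SpanMdAux

section Structural
variable {d : ℕ}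


lemma one_mem_M : ∀ s, (1 : FreeGroup (Fin d)) ∈ (EM d s).2
  | 0 => Or.inl rfl
  | s + 1 => Or.inl (Or.inl (one_mem_M s))

lemma mem_MyM {s : ℕ} {a b : FreeGroup (Fin d)} (ha : a ∈ (EM d s).2)
    (hb : b ∈ (EM d s).2) : a * ygen d (s + 1) * b ∈ (EM d (s + 1)).2 :=
  Or.inl (Or.inr (Set.mul_mem_mul (Set.mul_mem_mul ha (Or.inl rfl)) hb))

lemma mem_MyinvM {s : ℕ} {a b : FreeGroup (Fin d)} (ha : a ∈ (EM d s).2)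
    (hb : b ∈ (EM d s).2) : a * (ygen d (s + 1))⁻¹ * b ∈ (EM d (s + 1)).2 :=
  Or.inl (Or.inr (Set.mul_mem_mul (Set.mul_mem_mul ha (Or.inr rfl)) hb))

lemma mem_third {s : ℕ} {a n b : FreeGroup (Fin d)} (ha : a ∈ (EM d s).2)
    (hn : n ∈ (EM d s).2) (hn1 : n ≠ 1) (hb : b ∈ (EM d s).2) :
    a * (ygen d (s + 1))⁻¹ * n * ygen d (s + 1) * b ∈ (EM d (s + 1)).2 :=
  Or.inr (Set.mul_mem_mul (Set.mul_mem_mul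
    (Set.mul_mem_mul (Set.mul_mem_mul ha rfl) ⟨hn, hn1⟩) rfl) hb)

lemma mem_E_y {s : ℕ} {m : FreeGroup (Fin d)} (hm : m ∈ (EM d s).2) :
    m * ygen d (s + 1) ∈ (EM d (s + 1)).1 :=
  Or.inr (Set.mul_mem_mul hm (Or.inl rfl))

lemma mem_E_yinv {s : ℕ} {m : FreeGroup (Fin d)} (hm : m ∈ (EM d s).2) :
    m * (ygen d (s + 1))⁻¹ ∈ (EM d (s + 1)).1 :=
  Or.inr (Set.mul_mem_mul hm (Or.inr rfl))

lemma yzero_mem_E : ygen d 0 ∈ (EM d 0).1 := rfl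

lemma inv_mem_M : ∀ s, ∀ {g : FreeGroup (Fin d)}, g ∈ (EM d s).2 → g⁻¹ ∈ (EM d s).2
  | 0, g, hg => by
    rcases hg with h | h | h
    · subst h; exact Or.inl (by simp)
    · subst h; exact Or.inr (Or.inr rfl)
    · rw [Set.mem_singleton_iff] at h; subst h; exact Or.inr (Or.inl (by simp))
  | s + 1, g, hg => by
    rcases hg with (h | h) | h
    · exact Or.inl (Or.inl (inv_mem_M s h))
    · rcases h with ⟨x, hx, b, hb, rfl⟩
      rcases hx with ⟨a, ha, y, hy, rfl⟩
      rcases hy with hy | hy <;> subst hy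
      · refine Or.inl (Or.inr ?_)
        have : (a * ygen d (s+1) * b)⁻¹ = b⁻¹ * (ygen d (s+1))⁻¹ * a⁻¹ := by group
        rw [this]
        exact Set.mul_mem_mul (Set.mul_mem_mul (inv_mem_M s hb) (Or.inr rfl)) (inv_mem_M s ha)
      · refine Or.inl (Or.inr ?_)
        have : (a * (ygen d (s+1))⁻¹ * b)⁻¹ = b⁻¹ * ygen d (s+1) * a⁻¹ := by group
        rw [this]
        exact Set.mul_mem_mul (Set.mul_mem_mul (inv_mem_M s hb) (Or.inl rfl)) (inv_mem_M s ha)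
    · rcases h with ⟨x, hx, b, hb, rfl⟩
      rcases hx with ⟨x2, hx2, y, (hy : y = _), rfl⟩
      rcases hx2 with ⟨x3, hx3, n, hn, rfl⟩
      rcases hx3 with ⟨a, ha, z, (hz : z = _), rfl⟩
      subst hy; subst hz
      have : (a * (ygen d (s+1))⁻¹ * n * ygen d (s+1) * b)⁻¹
          = b⁻¹ * (ygen d (s+1))⁻¹ * n⁻¹ * ygen d (s+1) * a⁻¹ := by group
      rw [this]
      exact Or.inr (Set.mul_mem_mul (Set.mul_mem_mul (Set.mul_mem_mul (Set.mul_mem_mul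
        (inv_mem_M s hb) rfl) ⟨inv_mem_M s hn.1, by simpa using hn.2⟩) rfl) (inv_mem_M s ha))

lemma gen_mem_M : ∀ s, ∀ j ≤ s, ygen d j ∈ (EM d s).2
  | 0, 0, _ => Or.inr (Or.inl rfl)
  | s + 1, j, hj => by
    rcases Nat.lt_or_ge j (s + 1) with h | h
    · exact Or.inl (Or.inl (gen_mem_M s j (Nat.lt_succ_iff.mp h)))
    · have : j = s + 1 := le_antisymm hj h
      subst this
      have := mem_MyM (one_mem_M s) (one_mem_M s) (d := d)
      simpa using this

lemma M_subset_M_succ (s : ℕ) : (EM d s).2 ⊆ (EM d (s + 1)).2 :=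
  fun _ h => Or.inl (Or.inl h)

lemma E_subset_E_succ (s : ℕ) : (EM d s).1 ⊆ (EM d (s + 1)).1 :=
  fun _ h => Or.inl h

lemma E_mono {k l : ℕ} (h : k ≤ l) : (EM d k).1 ⊆ (EM d l).1 := by
  induction l with
  | zero => simpa [Nat.le_zero.mp h]
  | succ n ih =>
    rcases Nat.lt_or_ge k (n + 1) with h' | h'
    · exact (ih (Nat.lt_succ_iff.mp h')).trans (E_subset_E_succ n)
    · have : k = n + 1 := le_antisymm h h'
      subst this; rfl

lemma mem_M_cases {s : ℕ} {w : FreeGroup (Fin d)} (hw : w ∈ (EM d (s + 1)).2) :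
    w ∈ (EM d s).2 ∨
    (∃ a ∈ (EM d s).2, ∃ b ∈ (EM d s).2,
      w = a * ygen d (s + 1) * b ∨ w = a * (ygen d (s + 1))⁻¹ * b) ∨
    (∃ a ∈ (EM d s).2, ∃ n ∈ (EM d s).2, n ≠ 1 ∧ ∃ b ∈ (EM d s).2,
      w = a * (ygen d (s + 1))⁻¹ * n * ygen d (s + 1) * b) := by
  rcases hw with (h | h) | h
  · exact Or.inl h
  · refine Or.inr (Or.inl ?_)
    rcases h with ⟨x, hx, b, hb, rfl⟩
    rcases hx with ⟨a, ha, y, hy, rfl⟩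
    rcases hy with hy | hy <;> subst hy
    · exact ⟨a, ha, b, hb, Or.inl rfl⟩
    · exact ⟨a, ha, b, hb, Or.inr rfl⟩
  · refine Or.inr (Or.inr ?_)
    rcases h with ⟨x, hx, b, hb, rfl⟩
    rcases hx with ⟨x2, hx2, y, (hy : y = _), rfl⟩
    rcases hx2 with ⟨x3, hx3, n, hn, rfl⟩
    rcases hx3 with ⟨a, ha, z, (hz : z = _), rfl⟩
    subst hy; subst hz
    exact ⟨a, ha, n, hn.1, hn.2, b, hb, by group⟩


end Structural

variable (D : Type*) [CommRing D] (d : ℕ) (c2 c1 c0 : FreeGroup (Fin d) → D)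

noncomputable def iota : FreeGroup (Fin d) →* RingQuot (cubicRel D d c2 c1 c0) :=
  ((RingQuot.mkAlgHom D (cubicRel D d c2 c1 c0)).toRingHom.toMonoidHom).comp
    (MonoidAlgebra.of D (FreeGroup (Fin d)))

variable {D d c2 c1 c0}

lemma iota_def (g : FreeGroup (Fin d)) :
    iota D d c2 c1 c0 g = RingQuot.mkAlgHom D (cubicRel D d c2 c1 c0)
      (MonoidAlgebra.of D (FreeGroup (Fin d)) g) := rfl

lemma rel_apply {t : FreeGroup (Fin d)} (ht : t ∈ (EM d (d - 1)).1) :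
    iota D d c2 c1 c0 t ^ 3 + c2 t • iota D d c2 c1 c0 t ^ 2 +
      c1 t • iota D d c2 c1 c0 t + c0 t • 1 = 0 := by
  have h : cubicRel D d c2 c1 c0
      ((MonoidAlgebra.of D (FreeGroup (Fin d)) t) ^ 3 +
        c2 t • (MonoidAlgebra.of D (FreeGroup (Fin d)) t) ^ 2 +
        c1 t • MonoidAlgebra.of D (FreeGroup (Fin d)) t + c0 t • 1) 0 :=
    ⟨t, ht, rfl, rfl⟩
  have := RingQuot.mkAlgHom_rel D h
  simpa only [map_add, map_smul, map_pow, map_zero, map_one, iota_def] using this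

lemma iota_mul_inv (t : FreeGroup (Fin d)) :
    iota D d c2 c1 c0 t * iota D d c2 c1 c0 t⁻¹ = 1 := by
  rw [← map_mul, mul_inv_cancel, map_one]

lemma iota_inv_mul (t : FreeGroup (Fin d)) :
    iota D d c2 c1 c0 t⁻¹ * iota D d c2 c1 c0 t = 1 := by
  rw [← map_mul, inv_mul_cancel, map_one]

lemma add4_eq_zero₁ {R : Type*} [AddCommGroup R] {a b c e : R}
    (h : a + b + c + e = 0) : a = -b - c - e := by
  have h' : a + (b + c + e) = 0 := by rw [← h]; abel
  rw [eq_neg_of_add_eq_zero_left h']; abel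

lemma add4_eq_zero₄ {R : Type*} [AddCommGroup R] {a b c e : R}
    (h : a + b + c + e = 0) : e = -a - b - c := by
  have h' : e + (a + b + c) = 0 := by rw [← h]; abel
  rw [eq_neg_of_add_eq_zero_left h']; abel

/-- square formula -/
lemma sq_eq {t : FreeGroup (Fin d)} (ht : t ∈ (EM d (d - 1)).1) :
    iota D d c2 c1 c0 t * iota D d c2 c1 c0 t =
      -(c2 t • iota D d c2 c1 c0 t) - c1 t • 1 - c0 t • iota D d c2 c1 c0 t⁻¹ := by
  set x := iota D d c2 c1 c0 t with hx
  set xi := iota D d c2 c1 c0 t⁻¹ with hxi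
  have hmi : x * xi = 1 := iota_mul_inv t
  have h := rel_apply (c2 := c2) (c1 := c1) (c0 := c0) ht
  have h2 := congrArg (· * xi) h
  simp only [add_mul, smul_mul_assoc, zero_mul, one_mul] at h2
  have e3 : x ^ 3 * xi = x * x := by
    rw [pow_succ, mul_assoc, hmi, mul_one, pow_two]
  have e2 : x ^ 2 * xi = x := by rw [pow_two, mul_assoc, hmi, mul_one]
  rw [e3, e2, hmi] at h2
  exact add4_eq_zero₁ h2

/-- inverse formula -/
lemma inv_eq {t : FreeGroup (Fin d)} (ht : t ∈ (EM d (d - 1)).1) (u : IsUnit (c0 t)) :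
    iota D d c2 c1 c0 t⁻¹ =
      ((u.unit⁻¹ : Dˣ) : D) •
        (-(iota D d c2 c1 c0 t * iota D d c2 c1 c0 t) - c2 t • iota D d c2 c1 c0 t
         - c1 t • 1) := by
  have h := sq_eq (c2 := c2) (c1 := c1) (c0 := c0) ht
  have h2 : c0 t • iota D d c2 c1 c0 t⁻¹ =
      -(iota D d c2 c1 c0 t * iota D d c2 c1 c0 t) - c2 t • iota D d c2 c1 c0 t
        - c1 t • 1 := by
    have h3 : iota D d c2 c1 c0 t * iota D d c2 c1 c0 t + c2 t • iota D d c2 c1 c0 t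
        + c1 t • 1 + c0 t • iota D d c2 c1 c0 t⁻¹ = 0 := by rw [h]; abel
    exact add4_eq_zero₄ h3
  rw [← h2, smul_smul, IsUnit.val_inv_mul, one_smul]



section Span
variable {R : Type*} [CommRing D] [Ring R] [Algebra D R]

lemma span_sandwich {S T : Set R} {z : R} (hz : z ∈ Submodule.span D S) (p q : R)
    (h : ∀ u ∈ S, p * u * q ∈ Submodule.span D T) :
    p * z * q ∈ Submodule.span D T := by
  induction hz using Submodule.span_induction with
  | mem u hu => exact h u hu
  | zero => simpa using Submodule.zero_mem _
  | add u v _ _ hu hv => rw [mul_add, add_mul]; exact Submodule.add_mem _ hu hv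
  | smul r u _ hu =>
    rw [mul_smul_comm, smul_mul_assoc]; exact Submodule.smul_mem _ r hu

lemma span_mul_right {S T : Set R} {z : R} (hz : z ∈ Submodule.span D S) (q : R)
    (h : ∀ u ∈ S, u * q ∈ Submodule.span D T) :
    z * q ∈ Submodule.span D T := by
  have := span_sandwich (D := D) hz 1 q (by simpa using h)
  simpa using this

lemma span_mul_left {S T : Set R} {z : R} (hz : z ∈ Submodule.span D S) (p : R)
    (h : ∀ u ∈ S, p * u ∈ Submodule.span D T) :
    p * z ∈ Submodule.span D T := by
  have := span_sandwich (D := D) hz p 1 (by simpa using h)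
  simpa using this

end Span

/-- the span of the image of `M_{s+1}` -/
noncomputable def NS (D : Type*) [CommRing D] (d : ℕ)
    (c2 c1 c0 : FreeGroup (Fin d) → D) (s : ℕ) :
    Submodule D (RingQuot (cubicRel D d c2 c1 c0)) :=
  Submodule.span D (⇑(iota D d c2 c1 c0) '' (EM d s).2)

lemma iota_mem_NS {s : ℕ} {m : FreeGroup (Fin d)} (hm : m ∈ (EM d s).2) :
    iota D d c2 c1 c0 m ∈ NS D d c2 c1 c0 s :=
  Submodule.subset_span (Set.mem_image_of_mem _ hm)

lemma NS_le_succ (s : ℕ) : NS D d c2 c1 c0 s ≤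
    NS D d c2 c1 c0 (s + 1) :=
  Submodule.span_mono (Set.image_mono (M_subset_M_succ s))

/-- `ι t · ι t` lies in the span of `{ι t⁻¹, ι t, 1}`. -/
lemma sq_mem_span {t : FreeGroup (Fin d)} (ht : t ∈ (EM d (d - 1)).1) :
    iota D d c2 c1 c0 t * iota D d c2 c1 c0 t ∈
      Submodule.span D {iota D d c2 c1 c0 t⁻¹, iota D d c2 c1 c0 t, 1} := by
  rw [sq_eq ht]
  refine Submodule.sub_mem _ (Submodule.sub_mem _ (Submodule.neg_mem _ ?_) ?_) ?_ <;>
    exact Submodule.smul_mem _ _ (Submodule.subset_span (by simp))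

/-- `ι t⁻¹` lies in the span of `{ι t · ι t, ι t, 1}`. -/
lemma inv_mem_span {t : FreeGroup (Fin d)} (ht : t ∈ (EM d (d - 1)).1)
    (u : IsUnit (c0 t)) :
    iota D d c2 c1 c0 t⁻¹ ∈
      Submodule.span D {iota D d c2 c1 c0 t * iota D d c2 c1 c0 t,
        iota D d c2 c1 c0 t, 1} := by
  rw [inv_eq ht u]
  refine Submodule.smul_mem _ _ ?_
  refine Submodule.sub_mem _ (Submodule.sub_mem _ (Submodule.neg_mem _ ?_) ?_) ?_
  · exact Submodule.subset_span (by simp)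
  · exact Submodule.smul_mem _ _ (Submodule.subset_span (by simp))
  · exact Submodule.smul_mem _ _ (Submodule.subset_span (by simp))

/-- `ι t⁻¹ · ι t⁻¹` lies in the span of `{ι t⁻¹, ι t, 1}`. -/
lemma invsq_mem_span {t : FreeGroup (Fin d)} (ht : t ∈ (EM d (d - 1)).1)
    (u : IsUnit (c0 t)) :
    iota D d c2 c1 c0 t⁻¹ * iota D d c2 c1 c0 t⁻¹ ∈
      Submodule.span D {iota D d c2 c1 c0 t⁻¹, iota D d c2 c1 c0 t, 1} := by
  refine span_mul_left (inv_mem_span ht u) _ ?_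
  rintro u (rfl | rfl | rfl)
  · rw [← mul_assoc, iota_inv_mul, one_mul]
    exact Submodule.subset_span (by simp)
  · rw [iota_inv_mul]
    exact Submodule.subset_span (by simp)
  · rw [mul_one]
    exact Submodule.subset_span (by simp)



lemma key0 (hc0 : ∀ t ∈ (EM d (d - 1)).1, IsUnit (c0 t)) :
    ∀ m ∈ (EM d 0).2, ∀ m' ∈ (EM d 0).2,
      iota D d c2 c1 c0 (m * m') ∈ NS D d c2 c1 c0 0 := by
  have hyE : ygen d 0 ∈ (EM d (d - 1)).1 := E_mono (Nat.zero_le _) yzero_mem_E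
  have h1 : (1 : FreeGroup (Fin d)) ∈ (EM d 0).2 := Or.inl rfl
  have hym : ygen d 0 ∈ (EM d 0).2 := Or.inr (Or.inl rfl)
  have hyim : (ygen d 0)⁻¹ ∈ (EM d 0).2 := Or.inr (Or.inr rfl)
  have hspan : Submodule.span D {iota D d c2 c1 c0 (ygen d 0)⁻¹,
      iota D d c2 c1 c0 (ygen d 0), 1} ≤ NS D d c2 c1 c0 0 := by
    rw [Submodule.span_le]
    rintro _ (rfl | rfl | rfl)
    · exact iota_mem_NS hyim
    · exact iota_mem_NS hym
    · simpa using iota_mem_NS (c2 := c2) (c1 := c1) (c0 := c0) h1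
  intro m hm m' hm'
  rcases hm with rfl | rfl | hm
  · rw [one_mul]; exact iota_mem_NS hm'
  · rcases hm' with rfl | rfl | hm'
    · rw [mul_one]; exact iota_mem_NS hym
    · rw [map_mul]; exact hspan (sq_mem_span hyE)
    · rw [Set.mem_singleton_iff] at hm'; subst hm'
      rw [mul_inv_cancel]
      simpa using iota_mem_NS (c2 := c2) (c1 := c1) (c0 := c0) h1
  · rw [Set.mem_singleton_iff] at hm; subst hm
    rcases hm' with rfl | rfl | hm'
    · rw [mul_one]; exact iota_mem_NS hyim
    · rw [inv_mul_cancel]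
      simpa using iota_mem_NS (c2 := c2) (c1 := c1) (c0 := c0) h1
    · rw [Set.mem_singleton_iff] at hm'; subst hm'
      rw [map_mul]; exact hspan (invsq_mem_span hyE (hc0 _ hyE))

lemma keystep (s : ℕ) (hs : s + 2 ≤ d)
    (hc0 : ∀ t ∈ (EM d (d - 1)).1, IsUnit (c0 t))
    (ih : ∀ m ∈ (EM d s).2, ∀ m' ∈ (EM d s).2,
      iota D d c2 c1 c0 (m * m') ∈ NS D d c2 c1 c0 s) :
    ∀ m ∈ (EM d (s + 1)).2, ∀ m' ∈ (EM d (s + 1)).2,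
      iota D d c2 c1 c0 (m * m') ∈ NS D d c2 c1 c0 (s + 1) := by
  have hdm : s + 1 ≤ d - 1 := by omega
  have hEy : ∀ {m : FreeGroup (Fin d)}, m ∈ (EM d s).2 →
      m * ygen d (s + 1) ∈ (EM d (d - 1)).1 := fun hm => E_mono hdm (mem_E_y hm)
  have hEyi : ∀ {m : FreeGroup (Fin d)}, m ∈ (EM d s).2 →
      m * (ygen d (s + 1))⁻¹ ∈ (EM d (d - 1)).1 := fun hm => E_mono hdm (mem_E_yinv hm)
  have hy1E : ygen d (s + 1) ∈ (EM d (d - 1)).1 := by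
    simpa using hEy (one_mem_M s)
  have hyi1E : (ygen d (s + 1))⁻¹ ∈ (EM d (d - 1)).1 := by
    simpa using hEyi (one_mem_M s)
  -- Q1 : a·y⁻¹·(span M) ⊆ N'
  have Q1 : ∀ {a}, a ∈ (EM d s).2 → ∀ {x}, x ∈ NS D d c2 c1 c0 s →
      iota D d c2 c1 c0 a * iota D d c2 c1 c0 (ygen d (s + 1))⁻¹ * x
        ∈ NS D d c2 c1 c0 (s + 1) := by
    intro a ha x hx
    refine span_mul_left hx _ ?_
    rintro _ ⟨m, hm, rfl⟩
    rw [← map_mul, ← map_mul]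
    exact iota_mem_NS (mem_MyinvM ha hm)
  have Q2 : ∀ {a}, a ∈ (EM d s).2 → ∀ {x}, x ∈ NS D d c2 c1 c0 s →
      iota D d c2 c1 c0 a * iota D d c2 c1 c0 (ygen d (s + 1)) * x
        ∈ NS D d c2 c1 c0 (s + 1) := by
    intro a ha x hx
    refine span_mul_left hx _ ?_
    rintro _ ⟨m, hm, rfl⟩
    rw [← map_mul, ← map_mul]
    exact iota_mem_NS (mem_MyM ha hm)
  -- P1 : (span M)·y⁻¹·b ⊆ N'
  have P1 : ∀ {x}, x ∈ NS D d c2 c1 c0 s → ∀ {b}, b ∈ (EM d s).2 →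
      x * (iota D d c2 c1 c0 (ygen d (s + 1))⁻¹ * iota D d c2 c1 c0 b)
        ∈ NS D d c2 c1 c0 (s + 1) := by
    intro x hx b hb
    refine span_mul_right hx _ ?_
    rintro _ ⟨m, hm, rfl⟩
    rw [← mul_assoc, ← map_mul, ← map_mul]
    exact iota_mem_NS (mem_MyinvM hm hb)
  -- R1 : (span M)·y·(span M) ⊆ N'
  have R1 : ∀ {x x'}, x ∈ NS D d c2 c1 c0 s → x' ∈ NS D d c2 c1 c0 s →
      x * iota D d c2 c1 c0 (ygen d (s + 1)) * x' ∈ NS D d c2 c1 c0 (s + 1) := by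
    intro x x' hx hx'
    rw [mul_assoc]
    refine span_mul_right hx _ ?_
    rintro _ ⟨m, hm, rfl⟩
    rw [← mul_assoc]
    refine span_mul_left hx' _ ?_
    rintro _ ⟨m', hm', rfl⟩
    rw [← map_mul, ← map_mul]
    exact iota_mem_NS (mem_MyM hm hm')
  -- the hard pattern : a·y⁻¹·(span M)·y⁻¹·q ⊆ N'
  have HARD : ∀ {a}, a ∈ (EM d s).2 → ∀ {q}, q ∈ (EM d s).2 →
      ∀ {x}, x ∈ NS D d c2 c1 c0 s →
      iota D d c2 c1 c0 a * iota D d c2 c1 c0 (ygen d (s + 1))⁻¹ * x *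
        (iota D d c2 c1 c0 (ygen d (s + 1))⁻¹ * iota D d c2 c1 c0 q)
        ∈ NS D d c2 c1 c0 (s + 1) := by
    intro a ha q hq x hx
    refine span_sandwich hx _ _ ?_
    rintro _ ⟨c, hc, rfl⟩
    by_cases hc1 : c = 1
    · subst hc1
      have e : iota D d c2 c1 c0 a * iota D d c2 c1 c0 (ygen d (s + 1))⁻¹ *
            iota D d c2 c1 c0 1 *
            (iota D d c2 c1 c0 (ygen d (s + 1))⁻¹ * iota D d c2 c1 c0 q) =
          iota D d c2 c1 c0 a *
            (iota D d c2 c1 c0 (ygen d (s + 1))⁻¹ *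
              iota D d c2 c1 c0 (ygen d (s + 1))⁻¹) * iota D d c2 c1 c0 q := by
        simp only [← map_mul]
        exact congrArg _ (by group)
      rw [e]
      have hsq := sq_mem_span (t := (ygen d (s + 1))⁻¹) (c2 := c2) (c1 := c1)
        (c0 := c0) hyi1E
      rw [inv_inv] at hsq
      refine span_sandwich hsq _ _ ?_
      rintro _ (rfl | rfl | rfl)
      · rw [← map_mul, ← map_mul]
        exact iota_mem_NS (mem_MyM ha hq)
      · rw [← map_mul, ← map_mul]
        exact iota_mem_NS (mem_MyinvM ha hq)
      · rw [mul_one, ← map_mul]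
        exact NS_le_succ _ (ih _ ha _ hq)
    · have hvE : c⁻¹ * ygen d (s + 1) ∈ (EM d (d - 1)).1 := hEy (inv_mem_M s hc)
      have hinv := inv_mem_span (c2 := c2) (c1 := c1) (c0 := c0) hvE (hc0 _ hvE)
      have e : iota D d c2 c1 c0 a * iota D d c2 c1 c0 (ygen d (s + 1))⁻¹ *
            iota D d c2 c1 c0 c *
            (iota D d c2 c1 c0 (ygen d (s + 1))⁻¹ * iota D d c2 c1 c0 q) =
          iota D d c2 c1 c0 a * iota D d c2 c1 c0 ((c⁻¹ * ygen d (s + 1))⁻¹) *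
            iota D d c2 c1 c0 ((ygen d (s + 1))⁻¹ * q) := by
        simp only [← map_mul]
        exact congrArg _ (by group)
      rw [e]
      refine span_sandwich hinv _ _ ?_
      rintro _ (rfl | rfl | rfl)
      · have e2 : iota D d c2 c1 c0 a *
              (iota D d c2 c1 c0 (c⁻¹ * ygen d (s + 1)) *
                iota D d c2 c1 c0 (c⁻¹ * ygen d (s + 1))) *
              iota D d c2 c1 c0 ((ygen d (s + 1))⁻¹ * q) =
            iota D d c2 c1 c0 (a * c⁻¹) * iota D d c2 c1 c0 (ygen d (s + 1)) *
              iota D d c2 c1 c0 (c⁻¹ * q) := by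
          simp only [← map_mul]
          exact congrArg _ (by group)
        rw [e2]
        exact R1 (ih _ ha _ (inv_mem_M s hc)) (ih _ (inv_mem_M s hc) _ hq)
      · have e2 : iota D d c2 c1 c0 a * iota D d c2 c1 c0 (c⁻¹ * ygen d (s + 1)) *
              iota D d c2 c1 c0 ((ygen d (s + 1))⁻¹ * q) =
            iota D d c2 c1 c0 a * iota D d c2 c1 c0 (c⁻¹ * q) := by
          simp only [← map_mul]
          exact congrArg _ (by group)
        rw [e2]
        refine NS_le_succ _ (span_mul_left (ih _ (inv_mem_M s hc) _ hq) _ ?_)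
        rintro _ ⟨m, hm, rfl⟩
        rw [← map_mul]
        exact ih _ ha _ hm
      · rw [mul_one, ← map_mul]
        have e2 : iota D d c2 c1 c0 (a * ((ygen d (s + 1))⁻¹ * q)) =
            iota D d c2 c1 c0 (a * (ygen d (s + 1))⁻¹ * q) :=
          congrArg _ (by group)
        rw [e2]
        exact iota_mem_NS (mem_MyinvM ha hq)
  -- KeyY : M_{s+1} · y ⊆ N'
  have KeyY : ∀ {w}, w ∈ (EM d (s + 1)).2 →
      iota D d c2 c1 c0 w * iota D d c2 c1 c0 (ygen d (s + 1))
        ∈ NS D d c2 c1 c0 (s + 1) := by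
    intro w hw
    rcases mem_M_cases hw with hw' | ⟨a, ha, b, hb, (rfl | rfl)⟩ |
      ⟨a, ha, n, hn, hn1, b, hb, rfl⟩
    · rw [← map_mul]
      have e : iota D d c2 c1 c0 (w * ygen d (s + 1)) =
          iota D d c2 c1 c0 (w * ygen d (s + 1) * 1) := congrArg _ (by group)
      rw [e]
      exact iota_mem_NS (mem_MyM hw' (one_mem_M s))
    · -- w = a·y·b
      have e : iota D d c2 c1 c0 (a * ygen d (s + 1) * b) *
            iota D d c2 c1 c0 (ygen d (s + 1)) =
          iota D d c2 c1 c0 (a * b⁻¹) *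
            (iota D d c2 c1 c0 (b * ygen d (s + 1)) *
              iota D d c2 c1 c0 (b * ygen d (s + 1))) := by
        simp only [← map_mul]
        exact congrArg _ (by group)
      rw [e]
      refine span_mul_left (sq_mem_span (hEy hb)) _ ?_
      rintro _ (rfl | rfl | rfl)
      · have e2 : iota D d c2 c1 c0 (a * b⁻¹) *
              iota D d c2 c1 c0 ((b * ygen d (s + 1))⁻¹) =
            iota D d c2 c1 c0 (a * b⁻¹) *
              (iota D d c2 c1 c0 (ygen d (s + 1))⁻¹ * iota D d c2 c1 c0 b⁻¹) := by
          simp only [← map_mul]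
          exact congrArg _ (by group)
        rw [e2]
        exact P1 (ih _ ha _ (inv_mem_M s hb)) (inv_mem_M s hb)
      · have e2 : iota D d c2 c1 c0 (a * b⁻¹) *
              iota D d c2 c1 c0 (b * ygen d (s + 1)) =
            iota D d c2 c1 c0 (a * ygen d (s + 1) * 1) := by
          simp only [← map_mul]
          exact congrArg _ (by group)
        rw [e2]
        exact iota_mem_NS (mem_MyM ha (one_mem_M s))
      · rw [mul_one]
        exact NS_le_succ _ (ih _ ha _ (inv_mem_M s hb))
    · -- w = a·y⁻¹·b
      by_cases hb1 : b = 1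
      · subst hb1
        have e : iota D d c2 c1 c0 (a * (ygen d (s + 1))⁻¹ * 1) *
            iota D d c2 c1 c0 (ygen d (s + 1)) = iota D d c2 c1 c0 a := by
          simp only [← map_mul]
          exact congrArg _ (by group)
        rw [e]
        exact NS_le_succ _ (iota_mem_NS ha)
      · have e : iota D d c2 c1 c0 (a * (ygen d (s + 1))⁻¹ * b) *
            iota D d c2 c1 c0 (ygen d (s + 1)) =
            iota D d c2 c1 c0 (a * (ygen d (s + 1))⁻¹ * b * ygen d (s + 1) * 1) := by
          simp only [← map_mul]
          exact congrArg _ (by group)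
        rw [e]
        exact iota_mem_NS (mem_third ha hb hb1 (one_mem_M s))
    · -- w = a·y⁻¹·n·y·b
      have e : iota D d c2 c1 c0 (a * (ygen d (s + 1))⁻¹ * n * ygen d (s + 1) * b) *
            iota D d c2 c1 c0 (ygen d (s + 1)) =
          iota D d c2 c1 c0 (a * (ygen d (s + 1))⁻¹ * (n * b⁻¹)) *
            (iota D d c2 c1 c0 (b * ygen d (s + 1)) *
              iota D d c2 c1 c0 (b * ygen d (s + 1))) := by
        simp only [← map_mul]
        exact congrArg _ (by group)
      rw [e]
      refine span_mul_left (sq_mem_span (hEy hb)) _ ?_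
      rintro _ (rfl | rfl | rfl)
      · have e2 : iota D d c2 c1 c0 (a * (ygen d (s + 1))⁻¹ * (n * b⁻¹)) *
              iota D d c2 c1 c0 ((b * ygen d (s + 1))⁻¹) =
            iota D d c2 c1 c0 a * iota D d c2 c1 c0 (ygen d (s + 1))⁻¹ *
              iota D d c2 c1 c0 (n * b⁻¹) *
              (iota D d c2 c1 c0 (ygen d (s + 1))⁻¹ * iota D d c2 c1 c0 b⁻¹) := by
          simp only [← map_mul]
          exact congrArg _ (by group)
        rw [e2]
        exact HARD ha (inv_mem_M s hb) (ih _ hn _ (inv_mem_M s hb))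
      · have e2 : iota D d c2 c1 c0 (a * (ygen d (s + 1))⁻¹ * (n * b⁻¹)) *
              iota D d c2 c1 c0 (b * ygen d (s + 1)) =
            iota D d c2 c1 c0 (a * (ygen d (s + 1))⁻¹ * n * ygen d (s + 1) * 1) := by
          simp only [← map_mul]
          exact congrArg _ (by group)
        rw [e2]
        exact iota_mem_NS (mem_third ha hn hn1 (one_mem_M s))
      · rw [mul_one]
        have e2 : iota D d c2 c1 c0 (a * (ygen d (s + 1))⁻¹ * (n * b⁻¹)) =
            iota D d c2 c1 c0 a * iota D d c2 c1 c0 (ygen d (s + 1))⁻¹ *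
              iota D d c2 c1 c0 (n * b⁻¹) := by
          simp only [← map_mul]
        rw [e2]
        exact Q1 ha (ih _ hn _ (inv_mem_M s hb))
  -- NY : N'·y ⊆ N'
  have NY : ∀ {x}, x ∈ NS D d c2 c1 c0 (s + 1) →
      x * iota D d c2 c1 c0 (ygen d (s + 1)) ∈ NS D d c2 c1 c0 (s + 1) := by
    intro x hx
    refine span_mul_right hx _ ?_
    rintro _ ⟨w, hw, rfl⟩
    exact KeyY hw
  -- NYi : N'·y⁻¹ ⊆ N'
  have NYi : ∀ {x}, x ∈ NS D d c2 c1 c0 (s + 1) →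
      x * iota D d c2 c1 c0 (ygen d (s + 1))⁻¹ ∈ NS D d c2 c1 c0 (s + 1) := by
    intro x hx
    have hinv := inv_mem_span (c2 := c2) (c1 := c1) (c0 := c0) hy1E (hc0 _ hy1E)
    refine span_mul_left hinv x ?_
    rintro _ (rfl | rfl | rfl)
    · rw [← mul_assoc]
      exact NY (NY hx)
    · exact NY hx
    · rw [mul_one]; exact hx
  -- Q3 : (a·y⁻¹·n·y)·(span M) ⊆ N'
  have Q3 : ∀ {a n}, a ∈ (EM d s).2 → n ∈ (EM d s).2 → n ≠ 1 →
      ∀ {x}, x ∈ NS D d c2 c1 c0 s →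
      iota D d c2 c1 c0 (a * (ygen d (s + 1))⁻¹ * n * ygen d (s + 1)) * x
        ∈ NS D d c2 c1 c0 (s + 1) := by
    intro a n ha hn hn1 x hx
    refine span_mul_left hx _ ?_
    rintro _ ⟨m, hm, rfl⟩
    rw [← map_mul]
    exact iota_mem_NS (mem_third ha hn hn1 hm)
  -- L4 : N'·(M_s) ⊆ N'
  have L4 : ∀ {x}, x ∈ NS D d c2 c1 c0 (s + 1) → ∀ {m}, m ∈ (EM d s).2 →
      x * iota D d c2 c1 c0 m ∈ NS D d c2 c1 c0 (s + 1) := by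
    intro x hx m hm
    refine span_mul_right hx _ ?_
    rintro _ ⟨w, hw, rfl⟩
    rcases mem_M_cases hw with hw' | ⟨a, ha, b, hb, (rfl | rfl)⟩ |
      ⟨a, ha, n, hn, hn1, b, hb, rfl⟩
    · rw [← map_mul]
      exact NS_le_succ _ (ih _ hw' _ hm)
    · have e2 : iota D d c2 c1 c0 (a * ygen d (s + 1) * b) * iota D d c2 c1 c0 m =
          iota D d c2 c1 c0 a * iota D d c2 c1 c0 (ygen d (s + 1)) *
            iota D d c2 c1 c0 (b * m) := by
        simp only [← map_mul]
        exact congrArg _ (by group)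
      rw [e2]
      exact Q2 ha (ih _ hb _ hm)
    · have e2 : iota D d c2 c1 c0 (a * (ygen d (s + 1))⁻¹ * b) *
            iota D d c2 c1 c0 m =
          iota D d c2 c1 c0 a * iota D d c2 c1 c0 (ygen d (s + 1))⁻¹ *
            iota D d c2 c1 c0 (b * m) := by
        simp only [← map_mul]
        exact congrArg _ (by group)
      rw [e2]
      exact Q1 ha (ih _ hb _ hm)
    · have e2 : iota D d c2 c1 c0 (a * (ygen d (s + 1))⁻¹ * n * ygen d (s + 1) * b) *
            iota D d c2 c1 c0 m =
          iota D d c2 c1 c0 (a * (ygen d (s + 1))⁻¹ * n * ygen d (s + 1)) *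
            iota D d c2 c1 c0 (b * m) := by
        simp only [← map_mul]
        exact congrArg _ (by group)
      rw [e2]
      exact Q3 ha hn hn1 (ih _ hb _ hm)
  -- conclusion
  intro m hm m' hm'
  have hmN : iota D d c2 c1 c0 m ∈ NS D d c2 c1 c0 (s + 1) := iota_mem_NS hm
  rcases mem_M_cases hm' with hw' | ⟨a, ha, b, hb, (rfl | rfl)⟩ |
    ⟨a, ha, n, hn, hn1, b, hb, rfl⟩
  · rw [map_mul]
    exact L4 hmN hw'
  · have e2 : iota D d c2 c1 c0 (m * (a * ygen d (s + 1) * b)) =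
        iota D d c2 c1 c0 m * iota D d c2 c1 c0 a *
          iota D d c2 c1 c0 (ygen d (s + 1)) * iota D d c2 c1 c0 b := by
      simp only [← map_mul]
      exact congrArg _ (by group)
    rw [e2]
    exact L4 (NY (L4 hmN ha)) hb
  · have e2 : iota D d c2 c1 c0 (m * (a * (ygen d (s + 1))⁻¹ * b)) =
        iota D d c2 c1 c0 m * iota D d c2 c1 c0 a *
          iota D d c2 c1 c0 (ygen d (s + 1))⁻¹ * iota D d c2 c1 c0 b := by
      simp only [← map_mul]
      exact congrArg _ (by group)
    rw [e2]
    exact L4 (NYi (L4 hmN ha)) hb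
  · have e2 : iota D d c2 c1 c0 (m * (a * (ygen d (s + 1))⁻¹ * n * ygen d (s + 1) * b)) =
        iota D d c2 c1 c0 m * iota D d c2 c1 c0 a *
          iota D d c2 c1 c0 (ygen d (s + 1))⁻¹ * iota D d c2 c1 c0 n *
          iota D d c2 c1 c0 (ygen d (s + 1)) * iota D d c2 c1 c0 b := by
      simp only [← map_mul]
      exact congrArg _ (by group)
    rw [e2]
    exact L4 (NY (L4 (NYi (L4 hmN ha)) hn)) hb

lemma key_all (hc0 : ∀ t ∈ (EM d (d - 1)).1, IsUnit (c0 t)) :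
    ∀ s, s + 1 ≤ d → ∀ m ∈ (EM d s).2, ∀ m' ∈ (EM d s).2,
      iota D d c2 c1 c0 (m * m') ∈ NS D d c2 c1 c0 s := by
  intro s
  induction s with
  | zero => intro _; exact key0 hc0
  | succ s ih => intro hs; exact keystep s (by omega) hc0 (ih (by omega))

lemma all_mem (hd : 1 ≤ d) (hc0 : ∀ t ∈ (EM d (d - 1)).1, IsUnit (c0 t)) :
    ∀ g : FreeGroup (Fin d), iota D d c2 c1 c0 g ∈ NS D d c2 c1 c0 (d - 1) := by
  have hkey := key_all (c2 := c2) (c1 := c1) hc0 (d - 1) (by omega)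
  have hmul : ∀ x ∈ NS D d c2 c1 c0 (d - 1), ∀ z ∈ NS D d c2 c1 c0 (d - 1),
      x * z ∈ NS D d c2 c1 c0 (d - 1) := by
    intro x hx z hz
    refine span_mul_right hx z ?_
    rintro _ ⟨m, hm, rfl⟩
    refine span_mul_left hz _ ?_
    rintro _ ⟨m', hm', rfl⟩
    rw [← map_mul]
    exact hkey _ hm _ hm'
  have hgen : ∀ x : Fin d, FreeGroup.of x = ygen d x.1 := by
    intro x
    rw [ygen, dif_pos x.isLt]
  intro g
  induction g with
  | C1 => simpa using iota_mem_NS (c2 := c2) (c1 := c1) (c0 := c0) (one_mem_M (d - 1))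
  | of x =>
    rw [show (FreeGroup.of x : FreeGroup (Fin d)) = ygen d x.1 from hgen x]
    exact iota_mem_NS (gen_mem_M (d - 1) x.1 (by omega))
  | inv_of x _ =>
    rw [show (FreeGroup.of x : FreeGroup (Fin d)) = ygen d x.1 from hgen x]
    exact iota_mem_NS (inv_mem_M (d - 1) (gen_mem_M (d - 1) x.1 (by omega)))
  | mul x y hx hy =>
    rw [map_mul]
    exact hmul _ hx _ hy

end SpanMdAux

/-- Let `D` be a commutative ring and suppose each `s ∈ E_d` is
assigned a monic cubic polynomial `p_s(x) = x³ + c₂(s)x² + c₁(s)x + c₀(s) ∈ D[x]`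
with invertible constant term.  Then the quotient `A = D F_d / ⟨p_s(s) : s ∈ E_d⟩`
of the group algebra is spanned as a `D`-module by the image of `M_d`. -/
theorem span_of_Md (D : Type*) [CommRing D] (d : ℕ) (hd : 1 ≤ d)
    (c2 c1 c0 : FreeGroup (Fin d) → D)
    (hc0 : ∀ s ∈ (EM d (d - 1)).1, IsUnit (c0 s)) :
    Submodule.span D
        ((fun m => RingQuot.mkAlgHom D (cubicRel D d c2 c1 c0)
            (MonoidAlgebra.of D (FreeGroup (Fin d)) m)) '' (EM d (d - 1)).2) = ⊤ := by
  have hset : (fun m => RingQuot.mkAlgHom D (cubicRel D d c2 c1 c0)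
      (MonoidAlgebra.of D (FreeGroup (Fin d)) m)) =
      ⇑(SpanMdAux.iota D d c2 c1 c0) := rfl
  rw [hset]
  show SpanMdAux.NS D d c2 c1 c0 (d - 1) = ⊤
  rw [eq_top_iff]
  rintro r -
  obtain ⟨p, rfl⟩ := RingQuot.mkAlgHom_surjective D (cubicRel D d c2 c1 c0) r
  induction p using MonoidAlgebra.induction_on with
  | of g => exact SpanMdAux.all_mem hd hc0 g
  | add f g hf hg => rw [map_add]; exact add_mem hf hg
  | smul r f hf => rw [map_smul]; exact Submodule.smul_mem _ r hf
end

section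
/- Each matrix a_{i,d} is invertible over ℤ, and for 2 ≤ i ≤ d one has a_{i,d} + a_{i,d}⁻¹ = 2·I_{2^d}. Moreover (a_{i,d} − I_{2^d})² = 0 for all 1 ≤ i ≤ d, and (a_{i,d}·a_{j,d} − I_{2^d})² = 0 for all 1 ≤ i < j ≤ d. -/
/-- The equivalence `Fin (2^d) ⊕ Fin (2^d) ≃ Fin (2^(d+1))` used to realize `2 × 2`
block matrices of size `2^d` as matrices of size `2^(d+1)`. -/
def blockEquiv (d : ℕ) : (Fin (2 ^ d) ⊕ Fin (2 ^ d)) ≃ Fin (2 ^ (d + 1)) :=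
  finSumFinEquiv.trans (finCongr (by rw [pow_succ]; omega))

/-- The matrices `a_{i,d} ∈ M(2^d, ℤ)` (here `am d i` for `1 ≤ i ≤ d`), defined
recursively in `2 × 2` block form (blocks of size `2^(d-1)`):
`a_{1,d} = [[I, 0], [I, I]]` and, for `2 ≤ i ≤ d`,
`a_{i,d} = [[a_{i-1,d-1}, 0], [a_{i-1,d-1}, (a_{i-1,d-1})⁻¹]]`.
(The values for `i = 0` or `i > d` are irrelevant junk.) -/
noncomputable def am : (d : ℕ) → ℕ → Matrix (Fin (2 ^ d)) (Fin (2 ^ d)) ℤ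
  | 0, _ => 1
  | _ + 1, 0 => 1
  | d + 1, 1 =>
      Matrix.reindex (blockEquiv d) (blockEquiv d) (Matrix.fromBlocks 1 0 1 1)
  | d + 1, i + 2 =>
      Matrix.reindex (blockEquiv d) (blockEquiv d)
        (Matrix.fromBlocks (am d (i + 1)) 0 (am d (i + 1)) (am d (i + 1))⁻¹)

section RingLemmas
variable {R : Type*} [Ring R]

lemma myMulTwoSub {x : R} (h : (x - 1) ^ 2 = 0) : x * (2 - x) = 1 := by
  have e : x * (2 - x) = 1 - (x - 1) ^ 2 := by noncomm_ring
  rw [e, h, sub_zero]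

lemma myTwoSubMul {x : R} (h : (x - 1) ^ 2 = 0) : (2 - x) * x = 1 := by
  have e : (2 - x) * x = 1 - (x - 1) ^ 2 := by noncomm_ring
  rw [e, h, sub_zero]

lemma mySwapSq {b c : R} (hb : (b - 1) ^ 2 = 0) (h : (b * c - 1) ^ 2 = 0) :
    (c * b - 1) ^ 2 = 0 := by
  have key : c * b - 1 = (2 - b) * ((b * c - 1) * b) := by
    have e : (2 - b) * ((b * c - 1) * b) - (c * b - 1)
        = -((b - 1) ^ 2 * (c * b)) + (b - 1) ^ 2 := by noncomm_ring
    rw [hb] at e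
    simp only [zero_mul, neg_zero, zero_add] at e
    exact (sub_eq_zero.mp e).symm
  rw [key, pow_two]
  have e2 : (2 - b) * ((b * c - 1) * b) * ((2 - b) * ((b * c - 1) * b))
      = (2 - b) * ((b * c - 1) * (b * (2 - b)) * ((b * c - 1) * b)) := by noncomm_ring
  rw [e2, myMulTwoSub hb, mul_one]
  have e3 : (b * c - 1) * ((b * c - 1) * b) = (b * c - 1) ^ 2 * b := by noncomm_ring
  rw [e3, h]
  simp

end RingLemmas

lemma amInv {d i : ℕ} (h : (am d i - 1) ^ 2 = 0) : (am d i)⁻¹ = 2 - am d i :=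
  Matrix.inv_eq_right_inv (myMulTwoSub h)

lemma reindexSqZero {d : ℕ} (M : Matrix (Fin (2 ^ d) ⊕ Fin (2 ^ d)) (Fin (2 ^ d) ⊕ Fin (2 ^ d)) ℤ)
    (h : (M - 1) ^ 2 = 0) :
    ((Matrix.reindex (blockEquiv d) (blockEquiv d) M : Matrix (Fin (2 ^ (d+1))) (Fin (2 ^ (d+1))) ℤ) - 1) ^ 2 = 0 := by
  have : Matrix.reindex (blockEquiv d) (blockEquiv d) M
      = Matrix.reindexAlgEquiv ℤ ℤ (blockEquiv d) M := rfl
  rw [this, show (1 : Matrix (Fin (2 ^ (d+1))) (Fin (2 ^ (d+1))) ℤ)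
      = Matrix.reindexAlgEquiv ℤ ℤ (blockEquiv d) 1 from (map_one _).symm,
    ← map_sub, ← map_pow, h, map_zero]

example (d : ℕ) : am (d+1) 1 = Matrix.reindex (blockEquiv d) (blockEquiv d) (Matrix.fromBlocks 1 0 1 1) := rfl

example (d i : ℕ) : am (d+1) (i+2) = Matrix.reindex (blockEquiv d) (blockEquiv d)
        (Matrix.fromBlocks (am d (i + 1)) 0 (am d (i + 1)) (am d (i + 1))⁻¹) := rfl

lemma blockHelper {n : Type*} [Fintype n] [DecidableEq n] (A C D : Matrix n n ℤ)
    (h1 : (A - 1) * (A - 1) = 0) (h2 : (D - 1) * (D - 1) = 0)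
    (h3 : C * (A - 1) + (D - 1) * C = 0) :
    (Matrix.fromBlocks A 0 C D - 1) ^ 2 = 0 := by
  have e : Matrix.fromBlocks A 0 C D - (1 : Matrix (n ⊕ n) (n ⊕ n) ℤ)
      = Matrix.fromBlocks (A - 1) 0 C (D - 1) := by
    rw [← Matrix.fromBlocks_one, sub_eq_add_neg, Matrix.fromBlocks_neg, Matrix.fromBlocks_add]
    simp [sub_eq_add_neg]
  rw [e, pow_two, Matrix.fromBlocks_multiply]
  simp only [mul_zero, zero_mul, add_zero, zero_add]
  rw [h1, h2, h3]
  exact Matrix.fromBlocks_zero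

lemma amSq (d : ℕ) : (∀ i, 1 ≤ i → i ≤ d → (am d i - 1) ^ 2 = 0) ∧
    (∀ i j, 1 ≤ i → i < j → j ≤ d → (am d i * am d j - 1) ^ 2 = 0) := by
  induction d with
  | zero => exact ⟨fun i h1 h2 => by omega, fun i j h1 h2 h3 => by omega⟩
  | succ d ih =>
    obtain ⟨ih1, ih2⟩ := ih
    constructor
    · rintro (_ | _ | k) h1 h2
      · omega
      · apply reindexSqZero
        apply blockHelper <;> simp
      · have hb := ih1 (k + 1) (by omega) (by omega)
        set b := am d (k + 1) with hbdef
        show ((Matrix.reindex (blockEquiv d) (blockEquiv d)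
            (Matrix.fromBlocks b 0 b b⁻¹)) - 1) ^ 2 = 0
        rw [amInv hb]
        apply reindexSqZero
        apply blockHelper
        · rw [← pow_two]; exact hb
        · have e : (2 : Matrix (Fin (2 ^ d)) (Fin (2 ^ d)) ℤ) - b - 1 = -(b - 1) := by
            rw [neg_sub, sub_right_comm]; norm_num
          rw [e, neg_mul_neg, ← pow_two, hb]
        · noncomm_ring
    · rintro (_ | _ | k) (_ | _ | l) hi hij hj
      all_goals try omega
      · -- i = 1, j = l + 2
        have hc := ih1 (l + 1) (by omega) (by omega)
        set c := am d (l + 1) with hcdef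
        show ((Matrix.reindex (blockEquiv d) (blockEquiv d) (Matrix.fromBlocks 1 0 1 1)) *
            (Matrix.reindex (blockEquiv d) (blockEquiv d)
              (Matrix.fromBlocks c 0 c c⁻¹)) - 1) ^ 2 = 0
        rw [amInv hc]
        rw [show (Matrix.reindex (blockEquiv d) (blockEquiv d) (Matrix.fromBlocks 1 0 1 1)) *
            (Matrix.reindex (blockEquiv d) (blockEquiv d) (Matrix.fromBlocks c 0 c (2 - c)))
            = Matrix.reindex (blockEquiv d) (blockEquiv d)
              (Matrix.fromBlocks 1 0 1 1 * Matrix.fromBlocks c 0 c (2 - c)) from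
          (map_mul (Matrix.reindexAlgEquiv ℤ ℤ (blockEquiv d)) _ _).symm]
        rw [Matrix.fromBlocks_multiply]
        apply reindexSqZero
        simp only [Matrix.one_mul, Matrix.zero_mul, Matrix.mul_zero, add_zero, zero_add,
          zero_mul, one_mul, mul_zero]
        apply blockHelper
        · rw [← pow_two]; exact hc
        · have e : (2 : Matrix (Fin (2 ^ d)) (Fin (2 ^ d)) ℤ) - c - 1 = -(c - 1) := by
            rw [neg_sub, sub_right_comm]; norm_num
          rw [e, neg_mul_neg, ← pow_two, hc]
        · noncomm_ring
      · -- i = k + 2, j = l + 2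
        have hb := ih1 (k + 1) (by omega) (by omega)
        have hc := ih1 (l + 1) (by omega) (by omega)
        have hbc := ih2 (k + 1) (l + 1) (by omega) (by omega) (by omega)
        set b := am d (k + 1) with hbdef
        set c := am d (l + 1) with hcdef
        have hcb := mySwapSq hb hbc
        show ((Matrix.reindex (blockEquiv d) (blockEquiv d) (Matrix.fromBlocks b 0 b b⁻¹)) *
            (Matrix.reindex (blockEquiv d) (blockEquiv d)
              (Matrix.fromBlocks c 0 c c⁻¹)) - 1) ^ 2 = 0
        rw [amInv hb, amInv hc]
        rw [show (Matrix.reindex (blockEquiv d) (blockEquiv d) (Matrix.fromBlocks b 0 b (2 - b))) *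
            (Matrix.reindex (blockEquiv d) (blockEquiv d) (Matrix.fromBlocks c 0 c (2 - c)))
            = Matrix.reindex (blockEquiv d) (blockEquiv d)
              (Matrix.fromBlocks b 0 b (2 - b) * Matrix.fromBlocks c 0 c (2 - c)) from
          (map_mul (Matrix.reindexAlgEquiv ℤ ℤ (blockEquiv d)) _ _).symm]
        rw [Matrix.fromBlocks_multiply]
        apply reindexSqZero
        simp only [Matrix.zero_mul, Matrix.mul_zero, add_zero, zero_add, zero_mul, mul_zero]
        have hD : (2 - b) * (2 - c) = 2 - c * b := by
          refine left_inv_eq_right_inv ?_ (myMulTwoSub hcb)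
          calc (2 - b) * (2 - c) * (c * b) = (2 - b) * (((2 - c) * c) * b) := by noncomm_ring
            _ = (2 - b) * b := by rw [myTwoSubMul hc, one_mul]
            _ = 1 := myTwoSubMul hb
        rw [hD]
        apply blockHelper
        · rw [← pow_two]; exact hbc
        · have e : (2 : Matrix (Fin (2 ^ d)) (Fin (2 ^ d)) ℤ) - c * b - 1 = -(c * b - 1) := by
            rw [neg_sub, sub_right_comm]; norm_num
          rw [e, neg_mul_neg, ← pow_two, hcb]
        · -- (b*c + (2-b)*c) * (b*c - 1) + (2 - c*b - 1) * (b*c + (2-b)*c) = 0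
          have e : (b * c + (2 - b) * c) * (b * c - 1) + (2 - c * b - 1) * (b * c + (2 - b) * c)
              = 0 := by noncomm_ring
          exact e

/-- Each `a_{i,d}` (for `1 ≤ i ≤ d`) is invertible over `ℤ`; for
`2 ≤ i ≤ d` one has `a_{i,d} + a_{i,d}⁻¹ = 2·I`; moreover `(a_{i,d} - I)² = 0` for
`1 ≤ i ≤ d` and `(a_{i,d}·a_{j,d} - I)² = 0` for `1 ≤ i < j ≤ d`. -/
theorem am_properties (d : ℕ) :
    (∀ i, 1 ≤ i → i ≤ d → IsUnit (am d i)) ∧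
    (∀ i, 2 ≤ i → i ≤ d → am d i + (am d i)⁻¹ = 2) ∧
    (∀ i, 1 ≤ i → i ≤ d → (am d i - 1) ^ 2 = 0) ∧
    (∀ i j, 1 ≤ i → i < j → j ≤ d → (am d i * am d j - 1) ^ 2 = 0) := by
  obtain ⟨h1, h2⟩ := amSq d
  refine ⟨fun i hi hd => ?_, fun i hi hd => ?_, h1, h2⟩
  · exact isUnit_iff_exists.mpr ⟨2 - am d i, myMulTwoSub (h1 i hi hd), myTwoSubMul (h1 i hi hd)⟩
  · rw [amInv (h1 i (by omega) hd)]
    abel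
end

section
/- The assignment y_i ↦ a_{i,d} induces a well-defined ring homomorphism φ : A_d → M(2^d, ℤ); this homomorphism φ is injective, and A_d is a free ℤ-module of rank 2^d. -/
/-- The set `S_d = {y_i : 1 ≤ i ≤ d} ∪ {y_i y_j : 1 ≤ i < j ≤ d}` in the free group
of rank `d` (generators `y_{i+1} = FreeGroup.of i`). -/
def Sd (d : ℕ) : Set (FreeGroup (Fin d)) :=
  Set.range FreeGroup.of ∪
    {w | ∃ i j : Fin d, i < j ∧ w = FreeGroup.of i * FreeGroup.of j}

/-- The relation imposing `(x - 1)² = 0` in `ℤ F_d` for every `x ∈ S_d`. -/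
def quadRel (d : ℕ) (p q : MonoidAlgebra ℤ (FreeGroup (Fin d))) : Prop :=
  ∃ s ∈ Sd d, p = (MonoidAlgebra.of ℤ (FreeGroup (Fin d)) s - 1) ^ 2 ∧ q = 0

/-- The quotient ring `A_d = ℤ F_d / ⟨(x-1)² : x ∈ S_d⟩`. -/
abbrev Ad (d : ℕ) := RingQuot (quadRel d)

noncomputable def bm (d i : ℕ) : Matrix (Fin (2^d)) (Fin (2^d)) ℤ := am d (i+1) - 1

noncomputable def ralg (d : ℕ) :
    Matrix (Fin (2^d) ⊕ Fin (2^d)) (Fin (2^d) ⊕ Fin (2^d)) ℤ ≃ₐ[ℤ]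
      Matrix (Fin (2^(d+1))) (Fin (2^(d+1))) ℤ :=
  Matrix.reindexAlgEquiv ℤ ℤ (blockEquiv d)

lemma am_eq (d i : ℕ) : am d (i+1) = 1 + bm d i := by simp [bm]

lemma am_one (d : ℕ) : am (d+1) 1 = ralg d (Matrix.fromBlocks 1 0 1 1) := by
  simp [am, ralg, Matrix.reindexAlgEquiv_apply]

lemma am_two (d i : ℕ) :
    am (d+1) (i+2) = ralg d (Matrix.fromBlocks (am d (i+1)) 0 (am d (i+1)) (am d (i+1))⁻¹) := by
  simp [am, ralg, Matrix.reindexAlgEquiv_apply]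

lemma bm_zero' (d : ℕ) : bm (d+1) 0 = ralg d (Matrix.fromBlocks 0 0 1 0) := by
  rw [bm, am_one, ← map_one (ralg d), ← map_sub]
  congr 1
  rw [← Matrix.fromBlocks_one]
  ext (i|i) (j|j) <;> simp [Matrix.fromBlocks]

lemma bm_mul_self : ∀ (d i : ℕ), bm d i * bm d i = 0 := by
  intro d
  induction d with
  | zero => intro i; simp [bm, am]
  | succ d IH =>
    have hinv : ∀ i, (am d (i+1))⁻¹ = 1 - bm d i := by
      intro i
      apply Matrix.inv_eq_right_inv
      rw [am_eq]
      have h : (1 + bm d i) * (1 - bm d i) = 1 - bm d i * bm d i := by noncomm_ring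
      rw [h, IH i, sub_zero]
    have hsucc : ∀ i, bm (d+1) (i+1) =
        ralg d (Matrix.fromBlocks (bm d i) 0 (am d (i+1)) (-(bm d i))) := by
      intro i
      rw [bm, am_two, hinv, ← map_one (ralg d), ← map_sub]
      congr 1
      rw [← Matrix.fromBlocks_one]
      ext (k|k) (j|j) <;> simp [Matrix.fromBlocks, bm]
    intro i
    match i with
    | 0 =>
      rw [bm_zero', ← map_mul, Matrix.fromBlocks_multiply]
      simp
    | i + 1 =>
      rw [hsucc, ← map_mul, Matrix.fromBlocks_multiply]
      have h1 : bm d i * bm d i = 0 := IH i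
      have h2 : am d (i+1) * bm d i + -(bm d i * am d (i+1)) = 0 := by
        rw [am_eq]; noncomm_ring
      simp [h1, h2]

lemma am_inv (d i : ℕ) : (am d (i+1))⁻¹ = 1 - bm d i := by
  apply Matrix.inv_eq_right_inv
  rw [am_eq]
  have h : (1 + bm d i) * (1 - bm d i) = 1 - bm d i * bm d i := by noncomm_ring
  rw [h, bm_mul_self, sub_zero]

lemma bm_succ' (d i : ℕ) : bm (d+1) (i+1) =
    ralg d (Matrix.fromBlocks (bm d i) 0 (am d (i+1)) (-(bm d i))) := by
  rw [bm, am_two, am_inv, ← map_one (ralg d), ← map_sub]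
  congr 1
  rw [← Matrix.fromBlocks_one]
  ext (k|k) (j|j) <;> simp [Matrix.fromBlocks, bm]

lemma bm_anticomm : ∀ (d i j : ℕ), i ≠ j → bm d i * bm d j + bm d j * bm d i = 0 := by
  intro d
  induction d with
  | zero => intro i j _; simp [bm, am]
  | succ d IH =>
    have h0 : ∀ j, bm (d+1) 0 * bm (d+1) (j+1) + bm (d+1) (j+1) * bm (d+1) 0 = 0 := by
      intro j
      rw [bm_zero', bm_succ', ← map_mul, ← map_mul, ← map_add, Matrix.fromBlocks_multiply,
        Matrix.fromBlocks_multiply, Matrix.fromBlocks_add]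
      simp
    intro i j hij
    match i, j with
    | 0, 0 => exact absurd rfl hij
    | 0, j + 1 => exact h0 j
    | i + 1, 0 =>
      rw [add_comm (bm (d+1) (i+1) * bm (d+1) 0)]; exact h0 i
    | i + 1, j + 1 =>
      have hij' : i ≠ j := by omega
      rw [bm_succ', bm_succ', ← map_mul, ← map_mul, ← map_add, Matrix.fromBlocks_multiply,
        Matrix.fromBlocks_multiply, Matrix.fromBlocks_add]
      have h1 : bm d i * bm d j + bm d j * bm d i = 0 := IH i j hij'
      rw [EmbeddingLike.map_eq_zero_iff]
      have h2 : (am d (i+1) * bm d j + -bm d i * am d (j+1)) +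
          (am d (j+1) * bm d i + -bm d j * am d (i+1)) = 0 := by
        rw [am_eq, am_eq]; noncomm_ring
      have h3 : -bm d i * -bm d j + -bm d j * -bm d i = 0 := by
        rw [← h1]; noncomm_ring
      simp only [zero_mul, mul_zero, add_zero, zero_add]
      rw [h1, h2, h3, Matrix.fromBlocks_zero]

/-! ### Generic ring lemmas -/

lemma ring_anticomm {R : Type*} [Ring R] {x y : R} (hx : x*x = 0) (hy : y*y = 0)
    (h : (x+y+x*y)*(x+y+x*y) = 0) : x*y + y*x = 0 := by
  have e1 : (1 - x) * (x+y+x*y) = x + y - (x*x + x*x*y) := by noncomm_ring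
  rw [hx] at e1
  simp only [zero_mul, add_zero, zero_add, sub_zero] at e1
  have e2 : (1 - y) * (x + y) = x + y - y*x - y*y := by noncomm_ring
  rw [hy, sub_zero] at e2
  have e3 : (x + y - y*x)*(x+y+x*y) =
      x*y + y*x + (x*x + x*x*y + y*y - y*(x*x) - y*(x*x)*y) := by noncomm_ring
  rw [hx, hy] at e3
  simp only [zero_mul, mul_zero, add_zero, sub_zero, zero_add] at e3
  calc x*y + y*x = (x + y - y*x) * (x+y+x*y) := e3.symm
    _ = ((1-y)*((1-x)*(x+y+x*y)))*(x+y+x*y) := by rw [e1, e2]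
    _ = (1-y)*((1-x)*((x+y+x*y)*(x+y+x*y))) := by noncomm_ring
    _ = 0 := by rw [h, mul_zero, mul_zero]

lemma ring_sq {R : Type*} [Ring R] {x y : R} (hx : x*x = 0) (hy : y*y = 0)
    (hs : x*y + y*x = 0) : ((1+x)*(1+y)-1)*((1+x)*(1+y)-1) = 0 := by
  have hyx : y*x = -(x*y) := eq_neg_of_add_eq_zero_right hs
  have e0 : ((1+x)*(1+y)-1)*((1+x)*(1+y)-1) =
      x*(x+y+x*y) + y*(x+y+x*y) + (x*y)*(x+y+x*y) := by noncomm_ring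
  have ex : x*(x+y+x*y) = x*y + (x*x + x*x*y) := by noncomm_ring
  rw [hx] at ex; simp only [zero_mul, add_zero, zero_add] at ex
  have ey : y*(x+y+x*y) = y*x + y*y + (y*x)*y := by noncomm_ring
  rw [hy, hyx, add_zero] at ey
  have ey2 : (-(x*y))*y = -(x*(y*y)) := by noncomm_ring
  rw [ey2, hy, mul_zero, neg_zero, add_zero] at ey
  have exy : (x*y)*(x+y+x*y) = x*(y*x) + x*(y*y) + x*((y*x)*y) := by noncomm_ring
  rw [hy, hyx, mul_zero, add_zero] at exy
  have exy2 : x*(-(x*y)) = -((x*x)*y) := by noncomm_ring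
  have exy3 : x*((-(x*y))*y) = -((x*x)*(y*y)) := by noncomm_ring
  rw [exy2, exy3, hx] at exy
  simp only [zero_mul, mul_zero, neg_zero, add_zero] at exy
  rw [e0, ex, ey, exy, add_neg_cancel, add_zero]

/-! ### Products of the `bm` matrices and triangularity -/

noncomputable def Pm (d : ℕ) (l : List ℕ) : Matrix (Fin (2^d)) (Fin (2^d)) ℤ :=
  (l.map (bm d)).prod

@[simp] lemma Pm_nil (d : ℕ) : Pm d [] = 1 := rfl

lemma Pm_cons (d i : ℕ) (l : List ℕ) : Pm d (i :: l) = bm d i * Pm d l := by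
  simp [Pm]

def idxL (d : ℕ) (l : List ℕ) : ℕ := (l.map (fun i => 2^(d-1-i))).sum

@[simp] lemma idxL_nil (d : ℕ) : idxL d [] = 0 := rfl

lemma idxL_cons (d i : ℕ) (l : List ℕ) : idxL d (i :: l) = 2^(d-1-i) + idxL d l := by
  simp [idxL]

lemma Pm_shift (d : ℕ) : ∀ l : List ℕ, ∃ X Y, Pm (d+1) (l.map (·+1)) =
    ralg d (Matrix.fromBlocks (Pm d l) 0 X Y) := by
  intro l
  induction l with
  | nil =>
    refine ⟨0, 1, ?_⟩
    simp [Matrix.fromBlocks_one]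
  | cons i l IH =>
    obtain ⟨X, Y, h⟩ := IH
    refine ⟨am d (i+1) * Pm d l + (-(bm d i)) * X, (-(bm d i)) * Y, ?_⟩
    rw [List.map_cons, Pm_cons, h, bm_succ', ← map_mul, Matrix.fromBlocks_multiply]
    congr 1
    simp [Pm_cons]

lemma shape (d : ℕ) (l : List ℕ) (hs : l.Pairwise (·<·)) (hb : ∀ i ∈ l, i < d+1) :
    ∃ m : List ℕ, m.Pairwise (·<·) ∧ (∀ i ∈ m, i < d) ∧
      (l = m.map (·+1) ∨ l = 0 :: m.map (·+1)) := by
  cases l with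
  | nil => exact ⟨[], by simp, by simp, Or.inl rfl⟩
  | cons a l =>
    rw [List.pairwise_cons] at hs
    obtain ⟨ha, hsl⟩ := hs
    have hpos : ∀ i ∈ l, 1 ≤ i := fun i hi => by have := ha i hi; omega
    have hl : (l.map (· - 1)).map (·+1) = l := by
      rw [List.map_map]
      conv_rhs => rw [← List.map_id l]
      exact List.map_congr_left (fun i hi => by have := hpos i hi; simp; omega)
    have hm0s : (l.map (· - 1)).Pairwise (·<·) := by
      rw [List.pairwise_map]
      exact hsl.imp_of_mem (fun hx hy hlt => by
        have := hpos _ hx; omega)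
    have hm0b : ∀ i ∈ l.map (· - 1), i < d := by
      intro i hi
      rw [List.mem_map] at hi
      obtain ⟨j, hj, rfl⟩ := hi
      have h1 := hb j (List.mem_cons_of_mem _ hj)
      have h2 := hpos j hj
      omega
    rcases Nat.eq_zero_or_pos a with rfl | hapos
    · exact ⟨l.map (· - 1), hm0s, hm0b, Or.inr (by rw [hl])⟩
    · refine ⟨(a-1) :: l.map (· - 1), ?_, ?_, Or.inl ?_⟩
      · rw [List.pairwise_cons]
        refine ⟨?_, hm0s⟩
        intro b hb'
        rw [List.mem_map] at hb'
        obtain ⟨j, hj, rfl⟩ := hb'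
        have := ha j hj
        have := hpos j hj
        omega
      · intro i hi
        rcases List.mem_cons.mp hi with rfl | hi
        · have := hb a (List.mem_cons_self); omega
        · exact hm0b i hi
      · rw [List.map_cons, hl]
        congr 1
        omega

lemma idx_shift (d : ℕ) (m : List ℕ) (hb : ∀ i ∈ m, i < d) :
    idxL (d+1) (m.map (·+1)) = idxL d m := by
  unfold idxL
  rw [List.map_map]
  congr 1
  apply List.map_congr_left
  intro i hi
  have := hb i hi
  simp only [Function.comp_apply]
  congr 1
  omega

lemma idx_lt : ∀ (d : ℕ) (l : List ℕ), l.Pairwise (·<·) → (∀ i ∈ l, i < d) →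
    idxL d l < 2^d := by
  intro d
  induction d with
  | zero =>
    intro l _ hb
    cases l with
    | nil => simp
    | cons a l => exact absurd (hb a (List.mem_cons_self)) (by omega)
  | succ d IH =>
    intro l hs hb
    obtain ⟨m, hms, hmb, hcase | hcase⟩ := shape d l hs hb
    · rw [hcase, idx_shift d m hmb]
      have := IH m hms hmb
      have : (2:ℕ)^d ≤ 2^(d+1) := by
        rw [pow_succ]; omega
      omega
    · rw [hcase, idxL_cons, idx_shift d m hmb]
      have := IH m hms hmb
      simp only [Nat.sub_zero, Nat.add_sub_cancel]
      rw [pow_succ]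
      omega

lemma be_inl (d : ℕ) (k : Fin (2^d)) : ((blockEquiv d) (Sum.inl k) : ℕ) = (k : ℕ) := by
  simp [blockEquiv]

lemma be_inr (d : ℕ) (k : Fin (2^d)) : ((blockEquiv d) (Sum.inr k) : ℕ) = 2^d + (k : ℕ) := by
  simp [blockEquiv]
  omega

lemma ralg_apply' (d : ℕ) (M : Matrix (Fin (2^d) ⊕ Fin (2^d)) (Fin (2^d) ⊕ Fin (2^d)) ℤ)
    (s s' : Fin (2^d) ⊕ Fin (2^d)) :
    ralg d M ((blockEquiv d) s) ((blockEquiv d) s') = M s s' := by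
  simp [ralg, Matrix.reindexAlgEquiv_apply, Matrix.reindex_apply]

/-- zero index of `Fin (2^d)`. -/
def z2 (d : ℕ) : Fin (2^d) := ⟨0, Nat.two_pow_pos d⟩

lemma be_z2 (d : ℕ) : (blockEquiv d) (Sum.inl (z2 d)) = z2 (d+1) := by
  apply Fin.ext
  rw [be_inl]
  rfl

lemma tri : ∀ (d : ℕ) (l : List ℕ), l.Pairwise (·<·) → (∀ i ∈ l, i < d) →
    ∀ r : Fin (2^d),
      ((r : ℕ) = idxL d l → Pm d l r (z2 d) = 1) ∧
      ((r : ℕ) < idxL d l → Pm d l r (z2 d) = 0) := by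
  intro d
  induction d with
  | zero =>
    intro l hs hb r
    have hl : l = [] := by
      cases l with
      | nil => rfl
      | cons a l => exact absurd (hb a (List.mem_cons_self)) (by omega)
    subst hl
    constructor
    · intro _
      have : r = z2 0 := by
        apply Fin.ext
        simpa using ‹(r:ℕ) = idxL 0 []›
      rw [this]
      simp [Matrix.one_apply]
    · intro h
      simp at h
  | succ d IH =>
    intro l hs hb r
    obtain ⟨m, hms, hmb, hcase | hcase⟩ := shape d l hs hb
    · -- l = m.map (·+1)
      subst hcase
      obtain ⟨X, Y, hP⟩ := Pm_shift d m
      have hidx : idxL (d+1) (m.map (·+1)) = idxL d m := idx_shift d m hmb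
      have hbound : idxL d m < 2^d := idx_lt d m hms hmb
      obtain ⟨s, rfl⟩ := (blockEquiv d).surjective r
      rw [hP, hidx]
      cases s with
      | inl k =>
        rw [← be_z2, ralg_apply', Matrix.fromBlocks_apply₁₁, be_inl]
        exact IH m hms hmb k
      | inr k =>
        rw [be_inr]
        constructor
        · intro h; omega
        · intro h; omega
    · -- l = 0 :: m.map (·+1)
      subst hcase
      obtain ⟨X, Y, hP⟩ := Pm_shift d m
      have hidx : idxL (d+1) (m.map (·+1)) = idxL d m := idx_shift d m hmb
      have hbound : idxL d m < 2^d := idx_lt d m hms hmb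
      have hPm : Pm (d+1) (0 :: m.map (·+1)) =
          ralg d (Matrix.fromBlocks 0 0 (Pm d m) 0) := by
        rw [Pm_cons, hP, bm_zero', ← map_mul, Matrix.fromBlocks_multiply]
        congr 1 <;> simp
      have hidx2 : idxL (d+1) (0 :: m.map (·+1)) = 2^d + idxL d m := by
        rw [idxL_cons, hidx]
        norm_num
      obtain ⟨s, rfl⟩ := (blockEquiv d).surjective r
      rw [hPm, hidx2, ← be_z2, ralg_apply']
      cases s with
      | inl k =>
        rw [Matrix.fromBlocks_apply₁₁, be_inl]
        constructor
        · intro h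
          have := k.isLt
          omega
        · intro _
          simp
      | inr k =>
        rw [Matrix.fromBlocks_apply₂₁, be_inr]
        constructor
        · intro h
          exact (IH m hms hmb k).1 (by omega)
        · intro h
          exact (IH m hms hmb k).2 (by omega)

/-! ### The Finset-indexed family of matrices -/

noncomputable def eMat (d : ℕ) (S : Finset (Fin d)) : Matrix (Fin (2^d)) (Fin (2^d)) ℤ :=
  Pm d ((S.sort (·≤·)).map Fin.val)

def revF (d : ℕ) (i : Fin d) : Fin d := ⟨d - 1 - (i : ℕ), by omega⟩

lemma revF_revF (d : ℕ) (i : Fin d) : revF d (revF d i) = i := by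
  apply Fin.ext
  have := i.isLt
  simp [revF]
  omega

noncomputable def iotaF (d : ℕ) (S : Finset (Fin d)) : Fin (2^d) :=
  finFunctionFinEquiv (fun k => if revF d k ∈ S then 1 else 0)

lemma iotaF_injective (d : ℕ) : Function.Injective (iotaF d) := by
  intro S T h
  have h2 := finFunctionFinEquiv.injective h
  ext i
  have h3 := congrFun h2 (revF d i)
  rw [revF_revF] at h3
  by_cases hS : i ∈ S <;> by_cases hT : i ∈ T
  · simp [hS, hT]
  · simp [hS, hT] at h3
  · simp [hS, hT] at h3
  · simp [hS, hT]

lemma sort_map_sorted (d : ℕ) (S : Finset (Fin d)) :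
    ((S.sort (·≤·)).map Fin.val).Pairwise (·<·) := by
  rw [List.pairwise_map]
  exact S.sortedLT_sort.pairwise

lemma sort_map_bound (d : ℕ) (S : Finset (Fin d)) :
    ∀ i ∈ (S.sort (·≤·)).map Fin.val, i < d := by
  intro i hi
  rw [List.mem_map] at hi
  obtain ⟨j, _, rfl⟩ := hi
  exact j.isLt

lemma list_sum_sort (d : ℕ) (S : Finset (Fin d)) (f : Fin d → ℕ) :
    ((S.sort (·≤·)).map f).sum = S.sum f := by
  have h : ((S.sort (·≤·)).map f : Multiset ℕ) = S.val.map f := by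
    rw [← Multiset.map_coe, Finset.sort_eq]
  calc ((S.sort (·≤·)).map f).sum = (((S.sort (·≤·)).map f : List ℕ) : Multiset ℕ).sum := by
        rw [Multiset.sum_coe]
    _ = (S.val.map f).sum := by rw [h]
    _ = S.sum f := rfl

lemma iotaF_val (d : ℕ) (S : Finset (Fin d)) :
    (iotaF d S : ℕ) = idxL d ((S.sort (·≤·)).map Fin.val) := by
  rw [iotaF, finFunctionFinEquiv_apply]
  have h1 : ∀ k : Fin d, (Fin.val (if revF d k ∈ S then (1 : Fin 2) else 0)) * 2^(k:ℕ) =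
      if revF d k ∈ S then 2^(d-1-((revF d k):ℕ)) else 0 := by
    intro k
    have hk := k.isLt
    by_cases h : revF d k ∈ S
    · rw [if_pos h, if_pos h, Fin.val_one, one_mul]
      congr 1
      simp only [revF]
      omega
    · rw [if_neg h, if_neg h, Fin.val_zero, zero_mul]
  rw [Fintype.sum_congr _ _ h1]
  rw [Fintype.sum_equiv (Function.Involutive.toPerm (revF d) (revF_revF d))
    _ (fun j => if j ∈ S then 2^(d-1-(j:ℕ)) else 0) (fun k => by
      simp [Function.Involutive.toPerm]; congr)]
  rw [Finset.sum_ite_mem, Finset.univ_inter]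
  rw [idxL, List.map_map, list_sum_sort]
  rfl

lemma eMat_linearIndependent (d : ℕ) : LinearIndependent ℤ (eMat d) := by
  rw [linearIndependent_iff']
  intro s g hsum S hS
  by_contra hne
  set t := s.filter (fun S => g S ≠ 0) with ht
  have htne : t.Nonempty := ⟨S, Finset.mem_filter.mpr ⟨hS, hne⟩⟩
  obtain ⟨S₁, hS₁t, hmin⟩ := t.exists_min_image (fun S => (iotaF d S : ℕ)) htne
  have hS₁s : S₁ ∈ s := (Finset.mem_filter.mp hS₁t).1
  have hgS₁ : g S₁ ≠ 0 := (Finset.mem_filter.mp hS₁t).2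
  have h2 : (∑ T ∈ s, g T • eMat d T) (iotaF d S₁) (z2 d) = 0 := by
    rw [hsum]; rfl
  rw [Matrix.sum_apply] at h2
  have h3 : ∀ T ∈ s, (g T • eMat d T) (iotaF d S₁) (z2 d) =
      if T = S₁ then g S₁ else 0 := by
    intro T hT
    by_cases hgT : g T = 0
    · have hTS : T ≠ S₁ := fun h => hgS₁ (h ▸ hgT)
      simp [hgT, hTS]
    · have hTt : T ∈ t := Finset.mem_filter.mpr ⟨hT, hgT⟩
      by_cases hTS : T = S₁
      · subst hTS
        have h1 := (tri d _ (sort_map_sorted d T) (sort_map_bound d T) (iotaF d T)).1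
          (iotaF_val d T)
        simp [eMat, Matrix.smul_apply, h1]
      · have hlt : (iotaF d S₁ : ℕ) < (iotaF d T : ℕ) := by
          have hle := hmin T hTt
          have hne' : iotaF d S₁ ≠ iotaF d T := fun h => hTS (iotaF_injective d h).symm
          have : (iotaF d S₁ : ℕ) ≠ (iotaF d T : ℕ) := fun h => hne' (Fin.ext h)
          omega
        have h0 := (tri d _ (sort_map_sorted d T) (sort_map_bound d T) (iotaF d S₁)).2
          (by rw [← iotaF_val d T]; exact hlt)
        simp [eMat, Matrix.smul_apply, h0, hTS]
  rw [Finset.sum_congr rfl h3, Finset.sum_ite_eq' s S₁] at h2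
  rw [if_pos hS₁s] at h2
  exact hgS₁ h2

/-! ### The quotient algebra -/

noncomputable def mka (d : ℕ) : MonoidAlgebra ℤ (FreeGroup (Fin d)) →ₐ[ℤ] Ad d :=
  RingQuot.mkAlgHom ℤ (quadRel d)

noncomputable def tAd (d : ℕ) (i : Fin d) : Ad d :=
  mka d (MonoidAlgebra.of ℤ (FreeGroup (Fin d)) (FreeGroup.of i)) - 1

noncomputable def eAd (d : ℕ) (l : List (Fin d)) : Ad d := (l.map (tAd d)).prod

noncomputable def eF (d : ℕ) (S : Finset (Fin d)) : Ad d := eAd d (S.sort (·≤·))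

lemma quad_zero (d : ℕ) {s : FreeGroup (Fin d)} (hs : s ∈ Sd d) :
    (mka d (MonoidAlgebra.of ℤ (FreeGroup (Fin d)) s) - 1) *
      (mka d (MonoidAlgebra.of ℤ (FreeGroup (Fin d)) s) - 1) = 0 := by
  have h := RingQuot.mkAlgHom_rel ℤ (s := quadRel d)
    (⟨s, hs, rfl, rfl⟩ : quadRel d ((MonoidAlgebra.of ℤ (FreeGroup (Fin d)) s - 1) ^ 2) 0)
  rw [map_pow, map_sub, map_one, map_zero, pow_two] at h
  exact h

lemma t_sq (d : ℕ) (i : Fin d) : tAd d i * tAd d i = 0 :=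
  quad_zero d (Or.inl ⟨i, rfl⟩)

lemma mka_of_mul (d : ℕ) (g h : FreeGroup (Fin d)) :
    mka d (MonoidAlgebra.of ℤ (FreeGroup (Fin d)) (g * h)) =
      mka d (MonoidAlgebra.of ℤ (FreeGroup (Fin d)) g) *
        mka d (MonoidAlgebra.of ℤ (FreeGroup (Fin d)) h) := by
  rw [map_mul, map_mul]

lemma t_anticomm (d : ℕ) {i j : Fin d} (h : i ≠ j) :
    tAd d i * tAd d j + tAd d j * tAd d i = 0 := by
  have key : ∀ a b : Fin d, a < b → tAd d a * tAd d b + tAd d b * tAd d a = 0 := by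
    intro a b hab
    apply ring_anticomm (t_sq d a) (t_sq d b)
    have h2 := quad_zero d (Or.inr ⟨a, b, hab, rfl⟩)
    rw [mka_of_mul] at h2
    have ha : mka d (MonoidAlgebra.of ℤ (FreeGroup (Fin d)) (FreeGroup.of a)) = 1 + tAd d a := by
      rw [tAd]; abel
    have hb : mka d (MonoidAlgebra.of ℤ (FreeGroup (Fin d)) (FreeGroup.of b)) = 1 + tAd d b := by
      rw [tAd]; abel
    rw [ha, hb] at h2
    have e : (1 + tAd d a) * (1 + tAd d b) - 1 =
        tAd d a + tAd d b + tAd d a * tAd d b := by noncomm_ring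
    rw [e] at h2
    exact h2
  rcases lt_or_gt_of_ne h with hlt | hgt
  · exact key i j hlt
  · rw [add_comm]; exact key j i hgt

lemma eAd_append (d : ℕ) (l l' : List (Fin d)) :
    eAd d (l ++ l') = eAd d l * eAd d l' := by
  rw [eAd, eAd, eAd, List.map_append, List.prod_append]

lemma eAd_cons (d : ℕ) (i : Fin d) (l : List (Fin d)) :
    eAd d (i :: l) = tAd d i * eAd d l := by
  rw [eAd, eAd, List.map_cons, List.prod_cons]

/-- Reduction of `tAd i * (sorted product)` to a sorted product (up to sign). -/
lemma reduce_step (d : ℕ) : ∀ (l : List (Fin d)), l.Pairwise (·<·) → ∀ i : Fin d,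
    (tAd d i * eAd d l = 0) ∨ ∃ l', l'.Pairwise (·<·) ∧ (∀ x ∈ l', x = i ∨ x ∈ l) ∧
      (tAd d i * eAd d l = eAd d l' ∨ tAd d i * eAd d l = -(eAd d l')) := by
  intro l
  induction l with
  | nil =>
    intro _ i
    right
    exact ⟨[i], List.pairwise_singleton _ i, by simp, Or.inl (by simp [eAd])⟩
  | cons j l IH =>
    intro hs i
    rw [List.pairwise_cons] at hs
    obtain ⟨hj, hsl⟩ := hs
    rcases lt_trichotomy i j with hij | hij | hij
    · right
      refine ⟨i :: j :: l, ?_, by simp, Or.inl ?_⟩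
      · rw [List.pairwise_cons]
        refine ⟨?_, List.pairwise_cons.mpr ⟨hj, hsl⟩⟩
        intro b hb
        rcases List.mem_cons.mp hb with rfl | hb
        · exact hij
        · exact hij.trans (hj b hb)
      · rw [eAd_cons d i (j :: l)]
    · subst hij
      left
      rw [eAd_cons, ← mul_assoc, t_sq, zero_mul]
    · -- j < i
      have hne : i ≠ j := ne_of_gt hij
      have hanti : tAd d i * tAd d j = -(tAd d j * tAd d i) :=
        eq_neg_of_add_eq_zero_left (t_anticomm d hne)
      have hmain : tAd d i * eAd d (j :: l) = -(tAd d j * (tAd d i * eAd d l)) := by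
        rw [eAd_cons, ← mul_assoc, hanti]
        exact (neg_mul (tAd d j * tAd d i) (eAd d l)).trans (congrArg Neg.neg (mul_assoc (tAd d j) (tAd d i) (eAd d l)))
      rcases IH hsl i with h0 | ⟨l', hl's, hmem, heq⟩
      · left
        rw [hmain, h0, mul_zero, neg_zero]
      · have hjl' : ∀ b ∈ l', j < b := by
          intro b hb
          rcases hmem b hb with rfl | hb'
          · exact hij
          · exact hj b hb'
        have hsort : (j :: l').Pairwise (·<·) := List.pairwise_cons.mpr ⟨hjl', hl's⟩
        have hmem' : ∀ x ∈ j :: l', x = i ∨ x ∈ j :: l := by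
          intro x hx
          rcases List.mem_cons.mp hx with rfl | hx'
          · right; exact List.mem_cons_self
          · rcases hmem x hx' with rfl | h'
            · left; rfl
            · right; exact List.mem_cons_of_mem _ h'
        rcases heq with heq | heq
        · right
          refine ⟨j :: l', hsort, hmem', Or.inr ?_⟩
          rw [hmain, heq, eAd_cons]
        · right
          refine ⟨j :: l', hsort, hmem', Or.inl ?_⟩
          rw [hmain, heq, eAd_cons]
          exact (congrArg Neg.neg (mul_neg (tAd d j) (eAd d l'))).trans (neg_neg (tAd d j * eAd d l'))

lemma reduce (d : ℕ) : ∀ (l : List (Fin d)), eAd d l = 0 ∨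
    ∃ l', l'.Pairwise (·<·) ∧ (eAd d l = eAd d l' ∨ eAd d l = -(eAd d l')) := by
  intro l
  induction l with
  | nil => exact Or.inr ⟨[], List.Pairwise.nil, Or.inl rfl⟩
  | cons i l IH =>
    rw [eAd_cons]
    rcases IH with h0 | ⟨l', hs, heq | heq⟩
    · left; rw [h0, mul_zero]
    · rw [heq]
      rcases reduce_step d l' hs i with h0 | ⟨l'', hs'', _, heq'' | heq''⟩
      · left; exact h0
      · exact Or.inr ⟨l'', hs'', Or.inl heq''⟩
      · exact Or.inr ⟨l'', hs'', Or.inr heq''⟩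
    · have hmn : tAd d i * -eAd d l' = -(tAd d i * eAd d l') := mul_neg (tAd d i) (eAd d l')
      rw [heq, hmn]
      rcases reduce_step d l' hs i with h0 | ⟨l'', hs'', _, heq'' | heq''⟩
      · left; rw [h0, neg_zero]
      · exact Or.inr ⟨l'', hs'', Or.inr (congrArg Neg.neg heq'')⟩
      · exact Or.inr ⟨l'', hs'', Or.inl ((congrArg Neg.neg heq'').trans (neg_neg (eAd d l'')))⟩

/-! ### The representation -/

lemma one_add_mul_one_sub {R : Type*} [Ring R] (t : R) (h : t * t = 0) :
    (1 + t) * (1 - t) = 1 := by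
  have e : (1 + t) * (1 - t) = 1 - t * t := by noncomm_ring
  rw [e, h, sub_zero]

lemma one_sub_mul_one_add {R : Type*} [Ring R] (t : R) (h : t * t = 0) :
    (1 - t) * (1 + t) = 1 := by
  have e : (1 - t) * (1 + t) = 1 - t * t := by noncomm_ring
  rw [e, h, sub_zero]

noncomputable def uam (d i : ℕ) : (Matrix (Fin (2^d)) (Fin (2^d)) ℤ)ˣ where
  val := am d (i+1)
  inv := 1 - bm d i
  val_inv := by rw [am_eq]; exact one_add_mul_one_sub (bm d i) (bm_mul_self d i)
  inv_val := by rw [am_eq]; exact one_sub_mul_one_add (bm d i) (bm_mul_self d i)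

noncomputable def phi0 (d : ℕ) :
    MonoidAlgebra ℤ (FreeGroup (Fin d)) →ₐ[ℤ] Matrix (Fin (2^d)) (Fin (2^d)) ℤ :=
  MonoidAlgebra.lift ℤ _ (FreeGroup (Fin d))
    ((Units.coeHom _).comp (FreeGroup.lift (fun i : Fin d => uam d (i : ℕ))))

lemma phi0_of (d : ℕ) (i : Fin d) :
    phi0 d (MonoidAlgebra.of ℤ (FreeGroup (Fin d)) (FreeGroup.of i)) = am d ((i : ℕ)+1) := by
  rw [phi0, MonoidAlgebra.lift_of]
  simp [FreeGroup.lift_apply_of, uam]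

lemma phi0_rel (d : ℕ) : ∀ ⦃x y⦄, quadRel d x y → phi0 d x = phi0 d y := by
  rintro x y ⟨s, hs, rfl, rfl⟩
  rw [map_pow, map_sub, map_one, map_zero]
  rcases hs with ⟨i, rfl⟩ | ⟨i, j, hij, rfl⟩
  · rw [phi0_of, pow_two]
    exact bm_mul_self d (i : ℕ)
  · rw [map_mul, map_mul, phi0_of, phi0_of, pow_two, am_eq, am_eq]
    have hne : ((i : ℕ) : ℕ) ≠ (j : ℕ) := by
      have := hij
      omega
    exact ring_sq (bm_mul_self d (i : ℕ)) (bm_mul_self d (j : ℕ))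
      (bm_anticomm d (i : ℕ) (j : ℕ) hne)

noncomputable def phiA (d : ℕ) : Ad d →ₐ[ℤ] Matrix (Fin (2^d)) (Fin (2^d)) ℤ :=
  RingQuot.liftAlgHom ℤ ⟨phi0 d, phi0_rel d⟩

lemma phiA_mk (d : ℕ) (x : MonoidAlgebra ℤ (FreeGroup (Fin d))) :
    phiA d (mka d x) = phi0 d x := by
  rw [mka, phiA]
  exact RingQuot.liftAlgHom_mkAlgHom_apply ℤ (phi0 d) (phi0_rel d) x

lemma phiA_t (d : ℕ) (i : Fin d) : phiA d (tAd d i) = bm d (i : ℕ) := by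
  rw [tAd, map_sub, map_one, phiA_mk, phi0_of, bm]

lemma phiA_e (d : ℕ) (S : Finset (Fin d)) : phiA d (eF d S) = eMat d S := by
  rw [eF, eAd, map_list_prod, eMat, Pm, List.map_map, List.map_map]
  congr 1
  apply List.map_congr_left
  intro i _
  exact phiA_t d i

/-! ### Spanning -/

lemma eAd_mem_span (d : ℕ) (l : List (Fin d)) :
    eAd d l ∈ Submodule.span ℤ (Set.range (eF d)) := by
  rcases reduce d l with h0 | ⟨l', hs, heq | heq⟩
  · rw [h0]; exact Submodule.zero_mem _
  · rw [heq]
    have hsort : eAd d l' = eF d l'.toFinset := by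
      rw [eF]
      congr 1
      symm
      refine (List.toFinset_sort (·≤·) hs.nodup).mpr ?_
      exact hs.imp (fun h => le_of_lt h)
    rw [hsort]
    exact Submodule.subset_span ⟨_, rfl⟩
  · rw [heq]
    apply Submodule.neg_mem
    have hsort : eAd d l' = eF d l'.toFinset := by
      rw [eF]
      congr 1
      symm
      refine (List.toFinset_sort (·≤·) hs.nodup).mpr ?_
      exact hs.imp (fun h => le_of_lt h)
    rw [hsort]
    exact Submodule.subset_span ⟨_, rfl⟩

lemma top_le_span (d : ℕ) : ⊤ ≤ Submodule.span ℤ (Set.range (eF d)) := by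
  set N : Submodule ℤ (Ad d) := Submodule.span ℤ (Set.range (eAd d)) with hN
  have hmul : ∀ x y : Ad d, x ∈ N → y ∈ N → x * y ∈ N := by
    intro x y hx hy
    have h2 := Submodule.mul_mem_mul hx hy
    rw [hN] at h2; erw [Submodule.span_mul_span] at h2
    refine Submodule.span_le.mpr ?_ h2
    rintro z ⟨a, ⟨la, rfl⟩, b, ⟨lb, rfl⟩, rfl⟩
    refine Submodule.subset_span ⟨la ++ lb, ?_⟩
    show eAd d (la ++ lb) = eAd d la * eAd d lb
    exact eAd_append d la lb
  have hone : (1 : Ad d) ∈ N := Submodule.subset_span ⟨[], rfl⟩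
  have ht : ∀ i : Fin d, tAd d i ∈ N := fun i =>
    Submodule.subset_span ⟨[i], by simp [eAd]⟩
  have hy : ∀ i : Fin d, mka d (MonoidAlgebra.of ℤ (FreeGroup (Fin d)) (FreeGroup.of i)) ∈ N := by
    intro i
    have h : mka d (MonoidAlgebra.of ℤ (FreeGroup (Fin d)) (FreeGroup.of i)) = tAd d i + 1 := by
      rw [tAd]; abel
    rw [h]
    exact add_mem (ht i) hone
  have hyi : ∀ i : Fin d,
      mka d (MonoidAlgebra.of ℤ (FreeGroup (Fin d)) ((FreeGroup.of i)⁻¹)) ∈ N := by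
    intro i
    set a := mka d (MonoidAlgebra.of ℤ (FreeGroup (Fin d)) (FreeGroup.of i)) with ha'
    set c := mka d (MonoidAlgebra.of ℤ (FreeGroup (Fin d)) ((FreeGroup.of i)⁻¹)) with hc'
    have hca : c * a = 1 := by
      rw [ha', hc', ← map_mul, ← map_mul, inv_mul_cancel, map_one, map_one]
    have hsub : a * (1 - tAd d i) = 1 := by
      have ha : a = 1 + tAd d i := by rw [ha', tAd]; abel
      rw [ha]
      exact one_add_mul_one_sub (tAd d i) (t_sq d i)
    have hval : c = 1 - tAd d i := by
      calc c = c * 1 := (mul_one c).symm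
        _ = c * (a * (1 - tAd d i)) := by rw [hsub]
        _ = (c * a) * (1 - tAd d i) := (mul_assoc c a (1 - tAd d i)).symm
        _ = 1 - tAd d i := by rw [hca, one_mul]
    rw [hval]
    exact sub_mem hone (ht i)
  have hg : ∀ g : FreeGroup (Fin d), mka d (MonoidAlgebra.of ℤ (FreeGroup (Fin d)) g) ∈ N := by
    intro g
    refine FreeGroup.induction_on g ?_ ?_ ?_ ?_
    · rw [map_one, map_one]; exact hone
    · exact hy
    · intro x _; exact hyi x
    · intro x y hx' hy'
      rw [map_mul, map_mul]
      exact hmul _ _ hx' hy'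
  have hmka : ∀ x : MonoidAlgebra ℤ (FreeGroup (Fin d)), mka d x ∈ N := by
    intro x
    refine MonoidAlgebra.induction_on (motive := fun f => mka d f ∈ N) x hg ?_ ?_
    · intro f g hf hg'
      rw [map_add]
      exact add_mem hf hg'
    · intro r f hf
      rw [map_smul]
      exact Submodule.smul_mem _ r hf
  intro z _
  obtain ⟨y, rfl⟩ := RingQuot.mkAlgHom_surjective ℤ (quadRel d) z
  have hzN : mka d y ∈ N := hmka y
  have hle : N ≤ Submodule.span ℤ (Set.range (eF d)) := by
    rw [hN]
    refine Submodule.span_le.mpr ?_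
    rintro w ⟨l, rfl⟩
    exact eAd_mem_span d l
  exact hle hzN

/-- The assignment `y_i ↦ a_{i,d}` induces a well-defined ring
homomorphism `φ : A_d → M(2^d, ℤ)`; `φ` is injective, and `A_d` is a free
`ℤ`-module of rank `2^d`. -/
theorem Ad_faithful_representation (d : ℕ) :
    ∃ φ : Ad d →ₐ[ℤ] Matrix (Fin (2 ^ d)) (Fin (2 ^ d)) ℤ,
      (∀ i : Fin d,
          φ (RingQuot.mkAlgHom ℤ (quadRel d)
              (MonoidAlgebra.of ℤ (FreeGroup (Fin d)) (FreeGroup.of i))) =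
            am d ((i : ℕ) + 1)) ∧
      Function.Injective φ ∧ Module.Free ℤ (Ad d) ∧ Module.finrank ℤ (Ad d) = 2 ^ d := by
  have hindM : LinearIndependent ℤ (eMat d) := eMat_linearIndependent d
  have hcomp : ⇑(phiA d).toLinearMap ∘ eF d = eMat d := funext (phiA_e d)
  have hind : LinearIndependent ℤ (eF d) :=
    LinearIndependent.of_comp (phiA d).toLinearMap (by erw [hcomp]; exact hindM)
  have hspan := top_le_span d
  let b : Module.Basis (Finset (Fin d)) ℤ (Ad d) := Module.Basis.mk hind hspan
  have hb : ⇑b = eF d := Module.Basis.coe_mk hind hspan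
  refine ⟨phiA d, ?_, ?_, Module.Free.of_basis b, ?_⟩
  · intro i
    exact (phiA_mk d (MonoidAlgebra.of ℤ (FreeGroup (Fin d)) (FreeGroup.of i))).trans
      (phi0_of d i)
  · rw [injective_iff_map_eq_zero]
    intro a ha
    have h0 : Finsupp.linearCombination ℤ (eMat d) (b.repr a) = 0 := by
      calc Finsupp.linearCombination ℤ (eMat d) (b.repr a)
          = Finsupp.linearCombination ℤ (⇑(phiA d).toLinearMap ∘ ⇑b) (b.repr a) := by
            rw [hb, hcomp]
        _ = (phiA d).toLinearMap (Finsupp.linearCombination ℤ ⇑b (b.repr a)) :=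
            (Finsupp.apply_linearCombination ℤ (phiA d).toLinearMap ⇑b (b.repr a)).symm
        _ = (phiA d).toLinearMap a := by rw [b.linearCombination_repr]
        _ = 0 := ha
    have hz := linearIndependent_iff.mp hindM (b.repr a) h0
    have := b.linearCombination_repr a
    rw [hz, map_zero] at this
    exact this.symm
  · rw [Module.finrank_eq_card_basis b, Fintype.card_finset, Fintype.card_fin]
end

section
/- The ideal B_d satisfies (B_d)^{d+1} = 0, and (B_d)^d equals the ℤ-span of the single element (a₁−1)(a₂−1)⋯(a_d−1), which is nonzero; in particular B_d is nilpotent of degree exactly d+1. -/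
noncomputable section

/-- The augmentation `ℤ F_d → ℤ` (every group element maps to `1`). -/
def aug0 (d : ℕ) : MonoidAlgebra ℤ (FreeGroup (Fin d)) →ₐ[ℤ] ℤ :=
  MonoidAlgebra.lift ℤ ℤ (FreeGroup (Fin d)) 1

/-- The induced augmentation `A_d → ℤ`. -/
def aug (d : ℕ) : Ad d →ₐ[ℤ] ℤ :=
  RingQuot.liftAlgHom ℤ ⟨aug0 d, by
    rintro p q ⟨s, _, rfl, rfl⟩
    simp [aug0]⟩

/-- `B_d`, the image in `A_d` of the augmentation ideal of `ℤ F_d`, i.e. the kernel of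
the induced augmentation `A_d → ℤ` (a two-sided ideal, viewed as a `ℤ`-submodule so
that its powers make sense). -/
def Bd (d : ℕ) : Submodule ℤ (Ad d) := LinearMap.ker (aug d).toLinearMap

/-- `a_i`, the image of the generator `y_i` in `A_d`. -/
def ai (d : ℕ) (i : Fin d) : Ad d :=
  RingQuot.mkAlgHom ℤ (quadRel d) (MonoidAlgebra.of ℤ (FreeGroup (Fin d)) (FreeGroup.of i))

namespace BdProof

/-! ### Generic ring lemmas (proved in arbitrary rings, applied term-style in `Ad d`) -/

section Generic
variable {R : Type*} [Ring R]

lemma ring_anti {x y : R} (hx : x*x = 0) (hy : y*y = 0)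
    (h : (x + y + x*y)*(x + y + x*y) = 0) : y*x = -(x*y) := by
  have hx' : ∀ z : R, x*(x*z) = 0 := fun z => by rw [← mul_assoc, hx, zero_mul]
  have hy' : ∀ z : R, y*(y*z) = 0 := fun z => by rw [← mul_assoc, hy, zero_mul]
  have key : x*y + y*x = (1-x) * ((x + y + x*y)*(x + y + x*y)) * (1-y) := by
    simp only [mul_add, add_mul, sub_mul, mul_sub, mul_one, one_mul, mul_assoc, hx, hy, hx', hy',
      mul_zero, zero_mul, add_zero, zero_add, sub_zero, zero_sub]
    abel
  rw [h, mul_zero, zero_mul] at key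
  exact eq_neg_of_add_eq_zero_right key

lemma ring_anti_rev {x y : R} (hx : x*x = 0) (hy : y*y = 0)
    (h : y*x = -(x*y)) : (x + y + x*y)*(x + y + x*y) = 0 := by
  have hx' : ∀ z : R, x*(x*z) = 0 := fun z => by rw [← mul_assoc, hx, zero_mul]
  have hy' : ∀ z : R, y*(y*z) = 0 := fun z => by rw [← mul_assoc, hy, zero_mul]
  have h' : ∀ z : R, y*(x*z) = -(x*(y*z)) := fun z => by
    rw [← mul_assoc, h, neg_mul, mul_assoc]
  simp only [mul_add, add_mul, mul_assoc, hx, hy, hx', hy', h, h',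
    mul_zero, zero_mul, add_zero, zero_add, mul_neg, neg_neg]
  abel

lemma g_sq {x : R} (h : x^2 = 0) : x*x = 0 := by rwa [sq] at h

lemma g_anti_full {a b : R} (ha : (a-1)*(a-1) = 0) (hb : (b-1)*(b-1) = 0)
    (hab : (a*b-1)*(a*b-1) = 0) : (b-1)*(a-1) = -((a-1)*(b-1)) := by
  have e : a*b - 1 = (a-1) + (b-1) + (a-1)*(b-1) := by noncomm_ring
  rw [e] at hab
  exact ring_anti ha hb hab

lemma g_negswap {u v : R} (h : u = -v) : v = -u := by rw [h, neg_neg]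

lemma g_self_neg {u : R} (h : u = 0) : u = -u := by rw [h, neg_zero]

lemma g_move1 {bi bj t : R} (h : t*bi = bi*t) (ha : bj*bi = -(bi*bj)) :
    (bj*t)*bi = -(bi*(bj*t)) := by
  rw [mul_assoc, h, ← mul_assoc, ha]
  noncomm_ring

lemma g_move2 {bi bj t : R} (h : t*bi = -(bi*t)) (ha : bj*bi = -(bi*bj)) :
    (bj*t)*bi = bi*(bj*t) := by
  rw [mul_assoc, h, mul_neg, ← mul_assoc, ha]
  noncomm_ring

lemma g_zero1 {u bi t : R} (hsq : bi*bi = 0) (h : t*bi = bi*t) :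
    (u*(bi*t))*bi = 0 := by
  rw [mul_assoc, mul_assoc, h, ← mul_assoc bi, hsq, zero_mul, mul_zero]

lemma g_zero2 {u bi t : R} (hsq : bi*bi = 0) (h : t*bi = -(bi*t)) :
    (u*(bi*t))*bi = 0 := by
  rw [mul_assoc, mul_assoc, h, mul_neg, ← mul_assoc bi, hsq, zero_mul, neg_zero, mul_zero]

lemma g_inv {a : R} (h : (a-1)*(a-1) = 0) : a*(2-a) = 1 := by
  have e : a*(2-a) - 1 = -((a-1)*(a-1)) := by noncomm_ring
  rw [h, neg_zero, sub_eq_zero] at e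
  exact e

lemma g_two_sub {a : R} : (2 : R) - a - 1 = -(a - 1) := by
  have e : (2 : R) = 1 + 1 := (one_add_one_eq_two).symm
  rw [e]
  abel

lemma g_mul_expand {a b : R} : a*b - 1 = (a-1)*(b-1) + (a-1) + (b-1) := by noncomm_ring

lemma g_addsub {a b c d : R} : (a+b) - (c+d) = (a-c) + (b-d) := by noncomm_ring

lemma g_cancel {x : R} : (1+x) - 1 = x := by noncomm_ring

lemma g_sq_cancel {e : R} (h : e*e = 0) : ((1+e) - 1)^2 = 0 := by
  have e1 : (1+e) - 1 = e := g_cancel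
  rw [e1, sq, h]

lemma g_pair_rel {x y : R} (hx : x*x = 0) (hy : y*y = 0) (ha : y*x = -(x*y)) :
    ((1+x)*(1+y) - 1)^2 = 0 := by
  have e1 : (1+x)*(1+y) - 1 = x + y + x*y := by noncomm_ring
  rw [e1, sq]
  exact ring_anti_rev hx hy ha

lemma g_unit1 {e : R} (h : e*e = 0) : (1+e)*(1-e) = 1 := by
  have e1 : (1+e)*(1-e) = 1 - e*e := by noncomm_ring
  rw [e1, h, sub_zero]

lemma g_unit2 {e : R} (h : e*e = 0) : (1-e)*(1+e) = 1 := by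
  have e1 : (1-e)*(1+e) = 1 - e*e := by noncomm_ring
  rw [e1, h, sub_zero]

lemma g_swap {x y t : R} (ha : y*x = -(x*y)) : y*(x*t) = -(x*(y*t)) := by
  rw [← mul_assoc, ha]
  noncomm_ring

end Generic

variable {d : ℕ}

/-- The image of a group element in `A_d`. -/
def pg (d : ℕ) (g : FreeGroup (Fin d)) : Ad d :=
  RingQuot.mkAlgHom ℤ (quadRel d) (MonoidAlgebra.of ℤ (FreeGroup (Fin d)) g)

lemma pg_mul (g h : FreeGroup (Fin d)) : pg d (g*h) = pg d g * pg d h := by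
  rw [pg, pg, pg, map_mul, map_mul]

lemma pg_one : pg d 1 = 1 := by rw [pg, map_one, map_one]

lemma ai_eq (i : Fin d) : ai d i = pg d (FreeGroup.of i) := rfl

/-- `b_i = a_i - 1`. -/
def bg (d : ℕ) (i : Fin d) : Ad d := ai d i - 1

/-- Product of `b_i` over a list of indices. -/
def bl (d : ℕ) (l : List (Fin d)) : Ad d := (l.map (bg d)).prod

lemma bl_nil : bl d [] = 1 := rfl

lemma bl_cons (i : Fin d) (l : List (Fin d)) : bl d (i :: l) = bg d i * bl d l := by
  simp [bl]

lemma bl_append (l l' : List (Fin d)) : bl d (l ++ l') = bl d l * bl d l' := by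
  simp [bl]

/-- The span of products of at least `k` distinct generators `b_i`. -/
def Ck (d k : ℕ) : Submodule ℤ (Ad d) :=
  Submodule.span ℤ {x | ∃ l : List (Fin d), l.Nodup ∧ k ≤ l.length ∧ x = bl d l}

lemma quad_zero {s : FreeGroup (Fin d)} (hs : s ∈ Sd d) : (pg d s - 1)^2 = 0 := by
  have h := RingQuot.mkAlgHom_rel ℤ (s := quadRel d)
    (⟨s, hs, rfl, rfl⟩ : quadRel d ((MonoidAlgebra.of ℤ (FreeGroup (Fin d)) s - 1) ^ 2) 0)
  simpa [pg, map_pow, map_sub, map_one] using h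

lemma sq_zero (i : Fin d) : bg d i * bg d i = 0 :=
  g_sq (quad_zero (d := d) (s := FreeGroup.of i) (Or.inl ⟨i, rfl⟩))

lemma pair_zero {i j : Fin d} (hij : i < j) :
    (ai d i * ai d j - 1) * (ai d i * ai d j - 1) = 0 := by
  have h := quad_zero (d := d) (s := FreeGroup.of i * FreeGroup.of j)
    (Or.inr ⟨i, j, hij, rfl⟩)
  rw [pg_mul] at h
  exact g_sq h

lemma anti (i j : Fin d) : bg d j * bg d i = -(bg d i * bg d j) := by
  rcases lt_trichotomy i j with hij | hij | hij
  · exact g_anti_full (sq_zero i) (sq_zero j) (pair_zero hij)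
  · subst hij
    exact g_self_neg (sq_zero i)
  · exact g_negswap (g_anti_full (sq_zero j) (sq_zero i) (pair_zero hij))

lemma move (l : List (Fin d)) (i : Fin d) :
    bl d l * bg d i = bg d i * bl d l ∨ bl d l * bg d i = -(bg d i * bl d l) := by
  induction l with
  | nil =>
    left
    rw [bl_nil, one_mul, mul_one]
  | cons j t ih =>
    rw [bl_cons]
    rcases ih with h | h
    · right
      exact g_move1 h (anti i j)
    · left
      exact g_move2 h (anti i j)

lemma Ck_mono {k m : ℕ} (h : k ≤ m) : Ck d m ≤ Ck d k := by
  apply Submodule.span_mono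
  rintro x ⟨l, hn, hl, rfl⟩
  exact ⟨l, hn, le_trans h hl, rfl⟩

lemma bl_mem_Ck {l : List (Fin d)} (hn : l.Nodup) : bl d l ∈ Ck d l.length :=
  Submodule.subset_span ⟨l, hn, le_refl _, rfl⟩

lemma mulgen (l : List (Fin d)) (i : Fin d) (hn : l.Nodup) :
    bl d l * bg d i ∈ Ck d (l.length + 1) := by
  by_cases hi : i ∈ l
  · obtain ⟨l1, l2, rfl⟩ := List.append_of_mem hi
    have hz : bl d (l1 ++ i :: l2) * bg d i = 0 := by
      rw [bl_append, bl_cons]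
      rcases move l2 i with h | h
      · exact g_zero1 (sq_zero i) h
      · exact g_zero2 (sq_zero i) h
    rw [hz]
    exact Submodule.zero_mem _
  · have heq : bl d l * bg d i = bl d (l ++ [i]) := by
      rw [bl_append, bl_cons, bl_nil, mul_one]
    rw [heq]
    have hn' : (l ++ [i]).Nodup := by
      simp [List.nodup_append, hn, hi]
      intro a ha hai
      exact hi (hai ▸ ha)
    have h2 := bl_mem_Ck hn'
    simpa [List.length_append] using h2

lemma mulCk {k : ℕ} {x : Ad d} (hx : x ∈ Ck d k) (i : Fin d) :
    x * bg d i ∈ Ck d (k + 1) := by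
  induction hx using Submodule.span_induction with
  | mem x hx =>
    obtain ⟨l, hn, hl, rfl⟩ := hx
    exact Ck_mono (by omega) (mulgen l i hn)
  | zero =>
    rw [zero_mul]; exact Submodule.zero_mem _
  | add x y hx hy ihx ihy =>
    rw [add_mul]; exact Submodule.add_mem _ ihx ihy
  | smul a x hx ihx =>
    rw [smul_mul_assoc]; exact Submodule.smul_mem _ _ ihx

lemma sq_zero' (i : Fin d) : (ai d i - 1) * (ai d i - 1) = 0 := sq_zero i

lemma ai_mul_two_sub (i : Fin d) : ai d i * (2 - ai d i) = 1 := g_inv (sq_zero' i)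

lemma pg_inv_of (i : Fin d) : pg d (FreeGroup.of i)⁻¹ = 2 - ai d i := by
  have h2 : pg d (FreeGroup.of i)⁻¹ * ai d i = 1 := by
    rw [ai_eq, ← pg_mul, inv_mul_cancel, pg_one]
  calc pg d (FreeGroup.of i)⁻¹ = pg d (FreeGroup.of i)⁻¹ * (ai d i * (2 - ai d i)) := by
        rw [ai_mul_two_sub, mul_one]
    _ = (pg d (FreeGroup.of i)⁻¹ * ai d i) * (2 - ai d i) := by rw [mul_assoc]
    _ = 2 - ai d i := by rw [h2, one_mul]

lemma step (g : FreeGroup (Fin d)) :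
    ∀ k : ℕ, ∀ x ∈ Ck d k, x * (pg d g - 1) ∈ Ck d (k + 1) := by
  induction g using FreeGroup.induction_on with
  | C1 =>
    intro k x _
    have h : x * (pg d 1 - 1) = 0 := by
      rw [pg_one]
      have e : (1:Ad d) - 1 = 0 := sub_self 1
      rw [e, mul_zero]
    rw [h]
    exact Submodule.zero_mem _
  | of i =>
    intro k x hx
    exact mulCk hx i
  | inv_of i _ =>
    intro k x hx
    show x * (pg d (FreeGroup.of i)⁻¹ - 1) ∈ Ck d (k + 1)
    rw [pg_inv_of i]
    have h2 : (2 : Ad d) - ai d i - 1 = -(bg d i) := g_two_sub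
    rw [h2]
    have h3 : x * -(bg d i) = -(x * bg d i) := mul_neg x (bg d i)
    rw [h3]
    exact Submodule.neg_mem _ (mulCk hx i)
  | mul g h ihg ihh =>
    intro k x hx
    have hexp : pg d (g * h) - 1 =
        (pg d g - 1) * (pg d h - 1) + (pg d g - 1) + (pg d h - 1) := by
      rw [pg_mul]
      exact g_mul_expand
    rw [hexp, mul_add, mul_add]
    refine Submodule.add_mem _ (Submodule.add_mem _ ?_ (ihg k x hx)) (ihh k x hx)
    rw [← mul_assoc]
    exact Ck_mono (by omega) (ihh (k+1) _ (ihg k x hx))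

lemma one_mem_C0 : (1 : Ad d) ∈ Ck d 0 := by
  have h := bl_mem_Ck (d := d) (l := []) List.nodup_nil
  rwa [bl_nil] at h

lemma pg_sub_one_mem (g : FreeGroup (Fin d)) : pg d g - 1 ∈ Ck d 1 := by
  have h := step g 0 1 one_mem_C0
  rwa [one_mul] at h

lemma aug_mk (y : MonoidAlgebra ℤ (FreeGroup (Fin d))) :
    aug d (RingQuot.mkAlgHom ℤ (quadRel d) y) = aug0 d y := by
  simp [aug, RingQuot.liftAlgHom_mkAlgHom_apply]

lemma aug_pg (g : FreeGroup (Fin d)) : aug d (pg d g) = 1 := by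
  rw [pg, aug_mk]
  simp [aug0]

lemma mem_Bd_iff {x : Ad d} : x ∈ Bd d ↔ aug d x = 0 := by
  simp [Bd, LinearMap.mem_ker]
  exact LinearMap.mem_ker

lemma mem_span_pg {y : Ad d} (hy : y ∈ Bd d) :
    y ∈ Submodule.span ℤ {w : Ad d | ∃ g, w = pg d g - 1} := by
  obtain ⟨z, rfl⟩ := RingQuot.mkAlgHom_surjective ℤ (quadRel d) y
  have haug : aug0 d z = 0 := by
    rw [← aug_mk z]
    exact mem_Bd_iff.mp hy
  have key : ∀ z : MonoidAlgebra ℤ (FreeGroup (Fin d)),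
      RingQuot.mkAlgHom ℤ (quadRel d) z - (aug0 d z) • 1 ∈
        Submodule.span ℤ {w : Ad d | ∃ g, w = pg d g - 1} := by
    intro z
    induction z using MonoidAlgebra.induction_linear with
    | zero =>
      have e : RingQuot.mkAlgHom ℤ (quadRel d) 0 - (aug0 d 0) • (1 : Ad d) = 0 := by
        rw [map_zero, map_zero, zero_zsmul]
        exact sub_zero 0
      rw [e]
      exact Submodule.zero_mem _
    | add f g ihf ihg =>
      have e : RingQuot.mkAlgHom ℤ (quadRel d) (f + g) - (aug0 d (f + g)) • (1 : Ad d) =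
          (RingQuot.mkAlgHom ℤ (quadRel d) f - (aug0 d f) • 1) +
          (RingQuot.mkAlgHom ℤ (quadRel d) g - (aug0 d g) • 1) := by
        rw [map_add, map_add, add_zsmul]
        exact g_addsub
      rw [e]
      exact Submodule.add_mem _ ihf ihg
    | single g c =>
      have h1 : (MonoidAlgebra.single g c : MonoidAlgebra ℤ (FreeGroup (Fin d))) =
          c • MonoidAlgebra.of ℤ (FreeGroup (Fin d)) g := by
        rw [MonoidAlgebra.of_apply, MonoidAlgebra.smul_single, smul_eq_mul, mul_one]
      have h2 : aug0 d (MonoidAlgebra.single g c) = c := by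
        rw [aug0, MonoidAlgebra.lift_single]
        simp
      have h3 : RingQuot.mkAlgHom ℤ (quadRel d) (MonoidAlgebra.single g c) = c • pg d g := by
        rw [h1, map_smul]
        rfl
      rw [h2, h3]
      have h4 : c • pg d g - c • (1 : Ad d) = c • (pg d g - 1) := (smul_sub c (pg d g) 1).symm
      rw [h4]
      exact Submodule.smul_mem _ _ (Submodule.subset_span ⟨g, rfl⟩)
  have h5 := key z
  rw [haug] at h5
  have e : RingQuot.mkAlgHom ℤ (quadRel d) z - (0:ℤ) • (1 : Ad d) =
      RingQuot.mkAlgHom ℤ (quadRel d) z := by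
    simp
  rwa [e] at h5

lemma Bd_pow_le (k : ℕ) : Bd d ^ k ≤ Ck d k := by
  induction k with
  | zero =>
    rw [Submodule.pow_zero, Submodule.one_eq_span]
    refine Submodule.span_le.mpr ?_
    intro x hx
    rw [Set.mem_singleton_iff] at hx
    subst hx
    exact one_mem_C0
  | succ k ih =>
    rw [Submodule.pow_succ]
    refine Submodule.mul_le.mpr ?_
    intro x hx y hy
    have hx' : x ∈ Ck d k := ih hx
    have hy2 := mem_span_pg hy
    clear hy
    induction hy2 using Submodule.span_induction with
    | mem w hw =>
      obtain ⟨g, rfl⟩ := hw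
      exact step g k x hx'
    | zero =>
      rw [mul_zero]; exact Submodule.zero_mem _
    | add y z hy hz ihy ihz =>
      rw [mul_add]; exact Submodule.add_mem _ ihy ihz
    | smul a y hy ihy =>
      rw [mul_smul_comm]; exact Submodule.smul_mem _ _ ihy

lemma Ck_top_bot : Ck d (d + 1) = ⊥ := by
  rw [eq_bot_iff]
  refine Submodule.span_le.mpr ?_
  rintro x ⟨l, hn, hl, rfl⟩
  have hle := hn.length_le_card
  rw [Fintype.card_fin] at hle
  omega

lemma perm_sign {l l' : List (Fin d)} (h : l.Perm l') :
    bl d l = bl d l' ∨ bl d l = -(bl d l') := by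
  induction h with
  | nil => left; rfl
  | @cons x l₁ l₂ _ ih =>
    rcases ih with h | h
    · left; rw [bl_cons, bl_cons, h]
    · right
      rw [bl_cons, bl_cons, h]
      exact mul_neg (bg d x) (bl d l₂)
  | swap x y l =>
    right
    rw [bl_cons, bl_cons, bl_cons, bl_cons]
    exact g_swap (anti x y)
  | trans h1 h2 ih1 ih2 =>
    rcases ih1 with h | h <;> rcases ih2 with h' | h'
    · left; rw [h, h']
    · right; rw [h, h']
    · right; rw [h, h']
    · left
      rw [h, h']
      exact neg_neg _

/-- The full product `(a₁-1)⋯(a_d-1)`. -/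
def P (d : ℕ) : Ad d := bl d (List.finRange d)

lemma P_eq : P d = (List.ofFn fun i : Fin d => ai d i - 1).prod := by
  rw [List.ofFn_eq_map]
  rfl

lemma Ck_d_le : Ck d d ≤ Submodule.span ℤ {P d} := by
  refine Submodule.span_le.mpr ?_
  rintro x ⟨l, hn, hl, rfl⟩
  have hle := hn.length_le_card
  rw [Fintype.card_fin] at hle
  have hcard : l.length = d := le_antisymm hle hl
  have htf : l.toFinset = (List.finRange d).toFinset := by
    rw [List.toFinset_finRange]
    apply Finset.eq_univ_of_card
    rw [List.toFinset_card_of_nodup hn, hcard, Fintype.card_fin]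
  have hperm : l.Perm (List.finRange d) :=
    List.perm_of_nodup_nodup_toFinset_eq hn (List.nodup_finRange d) htf
  rcases perm_sign hperm with h | h
  · rw [h]; exact Submodule.subset_span rfl
  · rw [h]
    exact Submodule.neg_mem _ (Submodule.subset_span rfl)

lemma bg_mem_Bd (i : Fin d) : bg d i ∈ Bd d := by
  refine mem_Bd_iff.mpr ?_
  have h1 : aug d (bg d i) = aug d (ai d i) - aug d 1 := map_sub (aug d) (ai d i) 1
  rw [h1, map_one, ai_eq, aug_pg, sub_self]

lemma list_prod_mem_pow (l : List (Ad d)) (h : ∀ x ∈ l, x ∈ Bd d) :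
    l.prod ∈ Bd d ^ l.length := by
  induction l with
  | nil =>
    rw [List.prod_nil, List.length_nil, Submodule.pow_zero, Submodule.one_eq_span]
    exact Submodule.subset_span rfl
  | cons x t ih =>
    rw [List.prod_cons, List.length_cons]
    rcases Nat.eq_zero_or_pos t.length with h0 | h0
    · rw [List.length_eq_zero_iff.mp h0, List.prod_nil, mul_one, List.length_nil, zero_add,
        Submodule.pow_one]
      exact h x (List.mem_cons_self ..)
    rw [Submodule.pow_succ' (h := h0.ne')]
    exact Submodule.mul_mem_mul (h x (List.mem_cons_self ..))
      (ih fun y hy => h y (List.mem_cons_of_mem x hy))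

lemma P_mem_pow : P d ∈ Bd d ^ d := by
  have h := list_prod_mem_pow ((List.finRange d).map (bg d)) (by
    rintro x hx
    rw [List.mem_map] at hx
    obtain ⟨i, _, rfl⟩ := hx
    exact bg_mem_Bd i)
  rw [List.length_map, List.length_finRange] at h
  exact h

/-! ### Nonvanishing via the exterior algebra -/

abbrev Lam (d : ℕ) := ExteriorAlgebra ℤ (Fin d → ℤ)

def ee (d : ℕ) (i : Fin d) : Lam d := ExteriorAlgebra.ι ℤ (Pi.single i 1)

lemma ee_sq (i : Fin d) : ee d i * ee d i = 0 := ExteriorAlgebra.ι_sq_zero _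

lemma ee_anti (i j : Fin d) : ee d j * ee d i = -(ee d i * ee d j) :=
  eq_neg_of_add_eq_zero_right (ExteriorAlgebra.ι_add_mul_swap _ _)

def un (d : ℕ) (i : Fin d) : (Lam d)ˣ where
  val := 1 + ee d i
  inv := 1 - ee d i
  val_inv := g_unit1 (ee_sq i)
  inv_val := g_unit2 (ee_sq i)

def phi0 (d : ℕ) : MonoidAlgebra ℤ (FreeGroup (Fin d)) →ₐ[ℤ] Lam d :=
  MonoidAlgebra.lift ℤ (Lam d) (FreeGroup (Fin d))
    ((Units.coeHom (Lam d)).comp (FreeGroup.lift (un d)))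

lemma phi0_of (g : FreeGroup (Fin d)) :
    phi0 d (MonoidAlgebra.of ℤ (FreeGroup (Fin d)) g) = ((FreeGroup.lift (un d)) g : Lam d) := by
  rw [phi0, MonoidAlgebra.lift_of]
  rfl

def phi (d : ℕ) : Ad d →ₐ[ℤ] Lam d :=
  RingQuot.liftAlgHom ℤ ⟨phi0 d, by
    rintro p q ⟨s, hs, rfl, rfl⟩
    rw [map_pow, map_sub, map_one, map_zero, phi0_of]
    rcases hs with ⟨i, rfl⟩ | ⟨i, j, _, rfl⟩
    · rw [FreeGroup.lift_apply_of]
      exact g_sq_cancel (ee_sq i)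
    · rw [map_mul, FreeGroup.lift_apply_of, FreeGroup.lift_apply_of, Units.val_mul]
      exact g_pair_rel (ee_sq i) (ee_sq j) (ee_anti i j)⟩

lemma phi_ai (i : Fin d) : phi d (ai d i) = 1 + ee d i := by
  unfold phi ai
  rw [RingQuot.liftAlgHom_mkAlgHom_apply, phi0_of, FreeGroup.lift_apply_of]
  rfl

lemma phi_bg (i : Fin d) : phi d (bg d i) = ee d i := by
  calc phi d (bg d i) = phi d (ai d i) - phi d 1 := map_sub (phi d) (ai d i) 1
    _ = (1 + ee d i) - 1 := by rw [phi_ai, map_one]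
    _ = ee d i := g_cancel

def detF (d : ℕ) (n : ℕ) : (Fin d → ℤ) [⋀^Fin n]→ₗ[ℤ] ℤ :=
  if h : n = d then h.symm ▸ (Matrix.detRowAlternating : (Fin d → ℤ) [⋀^Fin d]→ₗ[ℤ] ℤ) else 0

lemma detF_d : detF d d = Matrix.detRowAlternating := by
  unfold detF
  rw [dif_pos rfl]

lemma P_ne_zero : P d ≠ 0 := by
  intro hP
  have h1 : phi d (P d) = ((List.finRange d).map (ee d)).prod := by
    show phi d ((List.map (bg d) (List.finRange d)).prod) = _
    rw [map_list_prod, List.map_map]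
    congr 1
    apply List.map_congr_left
    intro i _
    exact phi_bg i
  have h2 : phi d (P d) = ExteriorAlgebra.ιMulti ℤ d (fun i : Fin d => Pi.single i 1) := by
    rw [h1, ExteriorAlgebra.ιMulti_apply, List.ofFn_eq_map]
    rfl
  have h3 : ExteriorAlgebra.liftAlternating (detF d) (phi d (P d)) = 1 := by
    rw [h2, ExteriorAlgebra.liftAlternating_apply_ιMulti, detF_d]
    show Matrix.det (Matrix.of fun i : Fin d => (Pi.single i 1 : Fin d → ℤ)) = 1
    have e : (Matrix.of fun i : Fin d => (Pi.single i 1 : Fin d → ℤ)) = 1 := by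
      ext i j
      simp [Matrix.one_apply, Pi.single_apply, eq_comm]
    rw [e, Matrix.det_one]
  rw [hP, map_zero, map_zero] at h3
  exact zero_ne_one h3

end BdProof

open BdProof in
/-- `(B_d)^(d+1) = 0`, and `(B_d)^d` is the `ℤ`-span of the single
element `(a₁-1)(a₂-1)⋯(a_d-1)`, which is nonzero; in particular `B_d` is nilpotent of
degree exactly `d+1`. -/
theorem Bd_nilpotency :
    ∀ d : ℕ,
      Bd d ^ (d + 1) = ⊥ ∧
      Bd d ^ d = Submodule.span ℤ {(List.ofFn fun i : Fin d => ai d i - 1).prod} ∧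
      (List.ofFn fun i : Fin d => ai d i - 1).prod ≠ 0 := by
  intro d
  refine ⟨?_, ?_, ?_⟩
  · rw [eq_bot_iff, ← Ck_top_bot (d := d)]
    exact Bd_pow_le (d + 1)
  · rw [← P_eq]
    refine le_antisymm ((Bd_pow_le d).trans Ck_d_le) ?_
    refine Submodule.span_le.mpr ?_
    rw [Set.singleton_subset_iff]
    exact P_mem_pow
  · rw [← P_eq]
    exact P_ne_zero
end
end

section
/- Let R be an associative unital ring and let x, y be units of R satisfying (x−1)² = (y−1)² = (xy−1)² = 0. Then: (a) (y−1)(x−1) = −(x−1)(y−1); (b) x^k − 1 = k(x−1) for every integer k; (c) [x,y] − 1 = 2(x−1)(y−1), where [x,y] = x⁻¹y⁻¹xy; and (d) ([x,y] − 1)² = 0. -/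
private lemma aux_pow_unip {R : Type*} [Ring R] (u : Rˣ) (c : R)
    (hu : (u : R) = 1 + c) (hc : c * c = 0) :
    ∀ n : ℕ, ((u ^ n : Rˣ) : R) = 1 + (n : R) * c := by
  intro n
  induction n with
  | zero => simp
  | succ n ih =>
    have h1 : ((u ^ (n + 1) : Rˣ) : R) = ((u ^ n : Rˣ) : R) * (u : R) := by
      rw [pow_succ, Units.val_mul]
    have e : (1 + (n : R) * c) * (1 + c) = 1 + ((n : R) + 1) * c + (n : R) * (c * c) := by
      noncomm_ring
    rw [h1, ih, hu, e, hc, mul_zero, add_zero]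
    push_cast
    ring_nf

/-- Let `R` be an associative unital ring and `x, y` units of `R` with
`(x-1)² = (y-1)² = (xy-1)² = 0`.  Then
(a) `(y-1)(x-1) = -(x-1)(y-1)`;
(b) `x^k - 1 = k (x-1)` for every integer `k`;
(c) `[x,y] - 1 = 2 (x-1)(y-1)` where `[x,y] = x⁻¹y⁻¹xy`;
(d) `([x,y] - 1)² = 0`. -/
theorem quadratic_unipotent_relations (R : Type*) [Ring R] (x y : Rˣ)
    (hx : ((x : R) - 1) ^ 2 = 0) (hy : ((y : R) - 1) ^ 2 = 0)
    (hxy : (((x * y : Rˣ) : R) - 1) ^ 2 = 0) :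
    ((y : R) - 1) * ((x : R) - 1) = -(((x : R) - 1) * ((y : R) - 1)) ∧
    (∀ k : ℤ, ((x ^ k : Rˣ) : R) - 1 = (k : R) * ((x : R) - 1)) ∧
    (((x⁻¹ * y⁻¹ * x * y : Rˣ) : R) - 1 = 2 * (((x : R) - 1) * ((y : R) - 1))) ∧
    ((((x⁻¹ * y⁻¹ * x * y : Rˣ) : R) - 1) ^ 2 = 0) := by
  set a : R := (x : R) - 1 with ha_def
  set b : R := (y : R) - 1 with hb_def
  have hxv : (x : R) = 1 + a := by rw [ha_def]; noncomm_ring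
  have hyv : (y : R) = 1 + b := by rw [hb_def]; noncomm_ring
  have ha : a * a = 0 := by rw [← sq]; exact hx
  have hb : b * b = 0 := by rw [← sq]; exact hy
  -- the basic relation from (xy-1)² = 0
  have hc : (a + b + a * b) * (a + b + a * b) = 0 := by
    have h := hxy
    rw [Units.val_mul, hxv, hyv] at h
    calc (a + b + a * b) * (a + b + a * b)
        = ((1 + a) * (1 + b) - 1) ^ 2 := by noncomm_ring
      _ = 0 := h
  have key : a * b + b * a + b * (a * b) + a * b * a + a * b * (a * b) = 0 := by
    have e : a * b + b * a + b * (a * b) + a * b * a + a * b * (a * b)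
        = (a + b + a * b) * (a + b + a * b) - a * a - (a * a) * b - b * b - a * (b * b) := by
      noncomm_ring
    rw [e, hc, ha, hb]; simp
  have habab : a * b * (a * b) = 0 := by
    have e : a * b * (a * b)
        = a * ((a * b + b * a + b * (a * b) + a * b * a + a * b * (a * b)) * b)
          - (a * a) * (b * b) - a * (b * (a * (b * b))) - (a * a) * (b * (a * b))
          - (a * a) * (b * (a * (b * b))) := by noncomm_ring
    rw [e, key, ha, hb]; simp
  have haba : a * b * a = 0 := by
    have e : a * b * a
        = a * (a * b + b * a + b * (a * b) + a * b * a + a * b * (a * b))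
          - (a * a) * b - a * b * (a * b) - (a * a) * (b * a) - (a * a) * (b * (a * b)) := by
      noncomm_ring
    rw [e, key, ha, habab]; simp
  have hbab : b * (a * b) = 0 := by
    have e : b * (a * b)
        = (a * b + b * a + b * (a * b) + a * b * a + a * b * (a * b)) * b
          - a * (b * b) - b * (a * (b * b)) - a * b * (a * b) - a * b * (a * (b * b)) := by
      noncomm_ring
    rw [e, key, hb, habab]; simp
  have hsum : a * b + b * a = 0 := by
    have e : a * b + b * a
        = (a * b + b * a + b * (a * b) + a * b * a + a * b * (a * b))
          - b * (a * b) - a * b * a - a * b * (a * b) := by noncomm_ring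
    rw [e, key, hbab, haba, habab]; simp
  have hba : b * a = -(a * b) := eq_neg_of_add_eq_zero_right hsum
  -- inverses
  have hxinv : ((x⁻¹ : Rˣ) : R) = 1 - a := by
    refine Units.inv_eq_of_mul_eq_one_right ?_
    have e : (1 + a) * (1 - a) = 1 - a * a := by noncomm_ring
    rw [hxv, e, ha, sub_zero]
  have hyinv : ((y⁻¹ : Rˣ) : R) = 1 - b := by
    refine Units.inv_eq_of_mul_eq_one_right ?_
    have e : (1 + b) * (1 - b) = 1 - b * b := by noncomm_ring
    rw [hyv, e, hb, sub_zero]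
  -- part (c) value of the commutator
  have hcomm : ((x⁻¹ * y⁻¹ * x * y : Rˣ) : R) = (1 - a) * (1 - b) * (1 + a) * (1 + b) := by
    rw [Units.val_mul, Units.val_mul, Units.val_mul, hxinv, hyinv, hxv, hyv]
  have hc3 : ((x⁻¹ * y⁻¹ * x * y : Rˣ) : R) - 1 = 2 * (a * b) := by
    have e : (1 - a) * (1 - b) * (1 + a) * (1 + b) - 1 - 2 * (a * b)
        = -(a * a) - (a * a) * b - (a * b + b * a) - b * b - b * (a * b)
          + a * b * a + a * (b * b) + a * b * (a * b) := by noncomm_ring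
    have h0 : ((x⁻¹ * y⁻¹ * x * y : Rˣ) : R) - 1 - 2 * (a * b) = 0 := by
      rw [hcomm, e, ha, hb, hsum, hbab, haba, habab]; simp
    exact sub_eq_zero.mp h0
  refine ⟨hba, ?_, hc3, ?_⟩
  · -- part (b)
    intro k
    rcases k with n | n
    · have h := aux_pow_unip x a hxv ha n
      have hz : (x ^ (Int.ofNat n) : Rˣ) = x ^ n := zpow_natCast x n
      have hcast : ((Int.ofNat n : ℤ) : R) = (n : R) := by simp
      rw [hz, h, hcast]
      noncomm_ring
    · have hnegsq : (-a) * (-a) = 0 := by rw [neg_mul_neg, ha]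
      have hxi : ((x⁻¹ : Rˣ) : R) = 1 + (-a) := by rw [hxinv, sub_eq_add_neg]
      have h := aux_pow_unip x⁻¹ (-a) hxi hnegsq (n + 1)
      have hz : (x ^ (Int.negSucc n) : Rˣ) = (x⁻¹) ^ (n + 1) := by
        rw [zpow_negSucc, inv_pow]
      rw [hz, h, Int.cast_negSucc]
      noncomm_ring
  · -- part (d)
    rw [hc3]
    have e : (2 * (a * b)) ^ 2 = 4 * (a * b * (a * b)) := by noncomm_ring
    rw [e, habab, mul_zero]
end

section
/- The following relations hold: VUV = UVU − UV² + U²V − V²U + VU²; UVUV = −2UVU − 2U²V + V²U² − 2VU²; VUVU = −2UVU + U²V² − 2U²V − 2VU²; UV²U = 2(UVU + U²V + VU²) − U²V² − V²U²; VU²V = UV²U; UVU² = −U²VU; VUV² = −V²UV; U²VU² = 0; and V²UV² = 0. -/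
private lemma inv_form' {R : Type*} [Ring R] (x : Rˣ) (h : ((x : R) - 1) ^ 3 = 0) :
    ((x⁻¹ : Rˣ) : R) = (x : R) ^ 2 - 3 * (x : R) + 3 := by
  have hy : (x : R) * ((x : R) ^ 2 - 3 * (x : R) + 3) = 1 := by
    linear_combination (norm := (noncomm_ring; try simp; try norm_num)) h
  calc ((x⁻¹ : Rˣ) : R) = ((x⁻¹ : Rˣ) : R) * ((x : R) * ((x : R) ^ 2 - 3 * (x : R) + 3)) := by
        rw [hy, mul_one]
    _ = (((x⁻¹ : Rˣ) : R) * (x : R)) * ((x : R) ^ 2 - 3 * (x : R) + 3) := by rw [mul_assoc]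
    _ = (x : R) ^ 2 - 3 * (x : R) + 3 := by rw [Units.inv_mul, one_mul]

private lemma conj_cube' {R : Type*} [Ring R] (u x : Rˣ) (h : ((x : R) - 1) ^ 3 = 0) :
    (((u * x * u⁻¹ : Rˣ) : R) - 1) ^ 3 = 0 := by
  have h1 : (u : R) * ((u⁻¹ : Rˣ) : R) = 1 := u.mul_inv
  have h2 : ((u⁻¹ : Rˣ) : R) * (u : R) = 1 := u.inv_mul
  have k1 : ((u * x * u⁻¹ : Rˣ) : R) - 1
      = (u : R) * ((x : R) - 1) * ((u⁻¹ : Rˣ) : R) := by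
    push_cast
    linear_combination (norm := (noncomm_ring; try simp; try norm_num)) h1
  rw [k1]
  linear_combination (norm := (noncomm_ring; try simp; try norm_num))
    (u : R) * ((x : R) - 1) * h2 * (((x : R) - 1) * (((u⁻¹ : Rˣ) : R) * (u : R)) * ((x : R) - 1) * ((u⁻¹ : Rˣ) : R))
    + ((u : R) * ((x : R) - 1) * ((x : R) - 1)) * h2 * (((x : R) - 1) * ((u⁻¹ : Rˣ) : R))
    + (u : R) * h * ((u⁻¹ : Rˣ) : R)

private lemma inv_cube' {R : Type*} [Ring R] (x : Rˣ) (h : ((x : R) - 1) ^ 3 = 0) :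
    (((x⁻¹ : Rˣ) : R) - 1) ^ 3 = 0 := by
  have h1 : (x : R) * ((x⁻¹ : Rˣ) : R) = 1 := x.mul_inv
  have h2 : ((x⁻¹ : Rˣ) : R) * (x : R) = 1 := x.inv_mul
  have k : ((x⁻¹ : Rˣ) : R) - 1 = -(((x⁻¹ : Rˣ) : R) * ((x : R) - 1)) := by
    linear_combination (norm := (noncomm_ring; try simp; try norm_num)) h2
  have c : ((x : R) - 1) * ((x⁻¹ : Rˣ) : R) = ((x⁻¹ : Rˣ) : R) * ((x : R) - 1) := by
    linear_combination (norm := (noncomm_ring; try simp; try norm_num)) h1 - h2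
  rw [k]
  linear_combination (norm := (noncomm_ring; try simp; try norm_num))
    (-1 : R) * ((x⁻¹ : Rˣ) : R) * c * (((x : R) - 1) * ((x⁻¹ : Rˣ) : R) * ((x : R) - 1))
    + (-1 : R) * (((x⁻¹ : Rˣ) : R) * ((x⁻¹ : Rˣ) : R) * ((x : R) - 1)) * c * ((x : R) - 1)
    + (-1 : R) * (((x⁻¹ : Rˣ) : R) * ((x⁻¹ : Rˣ) : R)) * c * (((x : R) - 1) * ((x : R) - 1))
    + (-1 : R) * (((x⁻¹ : Rˣ) : R) * ((x⁻¹ : Rˣ) : R) * ((x⁻¹ : Rˣ) : R)) * h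

set_option maxHeartbeats 4000000 in
set_option maxRecDepth 4000 in
/-- Let `R` be an associative unital ring in which `2` and `3` are
invertible, and let `a, b` be units of `R` satisfying
`(a-1)³ = (b-1)³ = (ab-1)³ = (a⁻¹b-1)³ = (a²b-1)³ = (ab²-1)³ = 0`.  Writing `U = a-1`,
`V = b-1`, the following relations hold:
`VUV = UVU - UV² + U²V - V²U + VU²`; `UVUV = -2UVU - 2U²V + V²U² - 2VU²`;
`VUVU = -2UVU + U²V² - 2U²V - 2VU²`; `UV²U = 2(UVU + U²V + VU²) - U²V² - V²U²`;
`VU²V = UV²U`; `UVU² = -U²VU`; `VUV² = -V²UV`; `U²VU² = 0`; `V²UV² = 0`. -/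
theorem cubic_unipotent_relations_basic (R : Type*) [Ring R]
    (h2 : IsUnit (2 : R)) (h3 : IsUnit (3 : R)) (a b : Rˣ)
    (U V : R) (hU : U = (a : R) - 1) (hV : V = (b : R) - 1)
    (ha : ((a : R) - 1) ^ 3 = 0) (hb : ((b : R) - 1) ^ 3 = 0)
    (hab : (((a * b : Rˣ) : R) - 1) ^ 3 = 0)
    (ha'b : (((a⁻¹ * b : Rˣ) : R) - 1) ^ 3 = 0)
    (ha2b : (((a ^ 2 * b : Rˣ) : R) - 1) ^ 3 = 0)
    (hab2 : (((a * b ^ 2 : Rˣ) : R) - 1) ^ 3 = 0) :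
    V * U * V = U * V * U - U * V ^ 2 + U ^ 2 * V - V ^ 2 * U + V * U ^ 2 ∧
    U * V * U * V = -(2 * (U * V * U)) - 2 * (U ^ 2 * V) + V ^ 2 * U ^ 2 - 2 * (V * U ^ 2) ∧
    V * U * V * U = -(2 * (U * V * U)) + U ^ 2 * V ^ 2 - 2 * (U ^ 2 * V) - 2 * (V * U ^ 2) ∧
    U * V ^ 2 * U = 2 * (U * V * U + U ^ 2 * V + V * U ^ 2) - U ^ 2 * V ^ 2 - V ^ 2 * U ^ 2 ∧
    V * U ^ 2 * V = U * V ^ 2 * U ∧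
    U * V * U ^ 2 = -(U ^ 2 * V * U) ∧
    V * U * V ^ 2 = -(V ^ 2 * U * V) ∧
    U ^ 2 * V * U ^ 2 = 0 ∧
    V ^ 2 * U * V ^ 2 = 0 := by
  have hA : (a : R) = 1 + U := by linear_combination (norm := (noncomm_ring; try simp; try norm_num)) -hU
  have hB : (b : R) = 1 + V := by linear_combination (norm := (noncomm_ring; try simp; try norm_num)) -hV
  have hU3 : U ^ 3 = 0 := by rw [hU]; exact ha
  have hV3 : V ^ 3 = 0 := by rw [hV]; exact hb
  have hba : (((b * a : Rˣ) : R) - 1) ^ 3 = 0 := by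
    have e : b * a = a⁻¹ * (a * b) * (a⁻¹)⁻¹ := by group
    rw [e]; exact conj_cube' a⁻¹ (a * b) hab
  have hba1 : (((b * a⁻¹ : Rˣ) : R) - 1) ^ 3 = 0 := by
    have e : b * a⁻¹ = a * (a⁻¹ * b) * a⁻¹ := by group
    rw [e]; exact conj_cube' a (a⁻¹ * b) ha'b
  have hab1 : (((a * b⁻¹ : Rˣ) : R) - 1) ^ 3 = 0 := by
    have e : a * b⁻¹ = (b * a⁻¹)⁻¹ := by group
    rw [e]; exact inv_cube' _ hba1
  have hqab : ((1+U)*(1+V))^2 - 3*((1+U)*(1+V)) + 3 = (1-V+V^2)*(1-U+U^2) := by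
    have e := inv_form' (a * b) hab
    rw [mul_inv_rev] at e
    push_cast at e
    rw [inv_form' a ha, inv_form' b hb, hA, hB] at e
    linear_combination (norm := (noncomm_ring; try simp; try norm_num)) -e
  have hqba : ((1+V)*(1+U))^2 - 3*((1+V)*(1+U)) + 3 = (1-U+U^2)*(1-V+V^2) := by
    have e := inv_form' (b * a) hba
    rw [mul_inv_rev] at e
    push_cast at e
    rw [inv_form' a ha, inv_form' b hb, hA, hB] at e
    linear_combination (norm := (noncomm_ring; try simp; try norm_num)) -e
  have hqa1b : ((1-U+U^2)*(1+V))^2 - 3*((1-U+U^2)*(1+V)) + 3 = (1-V+V^2)*(1+U) := by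
    have e := inv_form' (a⁻¹ * b) ha'b
    rw [mul_inv_rev, inv_inv] at e
    push_cast at e
    rw [inv_form' a ha, inv_form' b hb, hA, hB] at e
    linear_combination (norm := (noncomm_ring; try simp; try norm_num)) -e
  have hqba1 : ((1+V)*(1-U+U^2))^2 - 3*((1+V)*(1-U+U^2)) + 3 = (1+U)*(1-V+V^2) := by
    have e := inv_form' (b * a⁻¹) hba1
    rw [mul_inv_rev, inv_inv] at e
    push_cast at e
    rw [inv_form' a ha, inv_form' b hb, hA, hB] at e
    linear_combination (norm := (noncomm_ring; try simp; try norm_num)) -e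
  have hqab1 : ((1+U)*(1-V+V^2))^2 - 3*((1+U)*(1-V+V^2)) + 3 = (1+V)*(1-U+U^2) := by
    have e := inv_form' (a * b⁻¹) hab1
    rw [mul_inv_rev, inv_inv] at e
    push_cast at e
    rw [inv_form' a ha, inv_form' b hb, hA, hB] at e
    linear_combination (norm := (noncomm_ring; try simp; try norm_num)) -e
  have hqa2b : (((1+U)^2)*(1+V))^2 - 3*(((1+U)^2)*(1+V)) + 3 = (1-V+V^2)*(1-U+U^2)*(1-U+U^2) := by
    have e := inv_form' (a ^ 2 * b) ha2b
    rw [mul_inv_rev] at e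
    have e2 : ((a ^ 2)⁻¹ : Rˣ) = a⁻¹ * a⁻¹ := by group
    rw [e2] at e
    push_cast at e
    rw [inv_form' a ha, inv_form' b hb, hA, hB] at e
    linear_combination (norm := (noncomm_ring; try simp; try norm_num)) -e
  have hqab2 : ((1+U)*((1+V)^2))^2 - 3*((1+U)*((1+V)^2)) + 3 = (1-V+V^2)*(1-V+V^2)*(1-U+U^2) := by
    have e := inv_form' (a * b ^ 2) hab2
    rw [mul_inv_rev] at e
    have e2 : ((b ^ 2)⁻¹ : Rˣ) = b⁻¹ * b⁻¹ := by group
    rw [e2] at e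
    push_cast at e
    rw [inv_form' a ha, inv_form' b hb, hA, hB] at e
    linear_combination (norm := (noncomm_ring; try simp; try norm_num)) -e
  have hT1 : ((-1:R)*U^2*V + (-1:R)*U*V*U + (1:R)*U*V^2 + (-1:R)*V*U^2 + (1:R)*V*U*V + (1:R)*V^2*U : R) = 0 := by
    refine h3.mul_left_cancel ?_
    linear_combination (norm := (noncomm_ring; try simp; try norm_num)) (-1:R) * hqab2 * (V) + (3:R) * hqab * (V) + (1:R) * hqab1 + (1:R) * hqab2 + (1:R) * (U) * hqa1b + (-1:R) * hqa2b + (1:R) * (U) * hqa2b + (-3:R) * (U) * hqab + (-1:R) * (U) * hV3 + (5:R) * hV3 * (V) + (2:R) * (V*U) * hV3 + (1:R) * (V^2*U) * hV3 + (1:R) * (U^2) * hV3 + (2:R) * (U) * hV3 * (V) + (2:R) * (U*V*U) * hV3 + (1:R) * (U) * hV3 * (V^2) + (1:R) * (U*V^2*U) * hV3 + (-2:R) * hV3 * (U*V) + (2:R) * hV3 * (U^2*V) + (1:R) * hV3 * (V*U*V) + (-1:R) * hV3 * (V*U^2*V) + (-4:R) * hV3 + (2:R) * hV3 * (U) + (-2:R)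 * hV3 * (U^2) + (-1:R) * hV3 * (V*U) + (1:R) * hV3 * (V*U^2) + (2:R) * hU3 * (V) + (-4:R) * hU3 * (U) + (-1:R) * hU3 * (U*V) + (-1:R) * hU3 * (U^2) + (-2:R) * hU3 * (U^2*V) + (-2:R) * hU3 * (V^2) + (-1:R) * hU3 * (V*U) + (-1:R) * hU3 * (V*U*V) + (-2:R) * hU3 * (V*U^2) + (-2:R) * hU3 * (V*U^2*V) + (6:R) * hU3 + (-2:R) * (V) * hU3 + (1:R) * (V) * hU3 * (U) + (2:R) * (V^2) * hU3 + (-1:R) * (V^2) * hU3 * (U) + (2:R) * (U*V) * hU3 + (-1:R) * (U*V) * hU3 * (U) + (-2:R) * (U*V^2) * hU3 + (1:R) * (U*V^2) * hU3 * (U)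
  have hT2 : ((2:R)*U^2*V + (2:R)*U*V*U + (2:R)*V*U^2 + (1:R)*U*V*U*V + (-1:R)*V^2*U^2 : R) = 0 := by
    refine h3.mul_left_cancel ?_
    linear_combination (norm := (noncomm_ring; try simp; try norm_num)) (3:R) * hqab + (-3:R) * hT1
  have hT3 : ((2:R)*U^2*V + (2:R)*U*V*U + (2:R)*V*U^2 + (-1:R)*U^2*V^2 + (1:R)*V*U*V*U : R) = 0 := by
    refine h3.mul_left_cancel ?_
    linear_combination (norm := (noncomm_ring; try simp; try norm_num)) (3:R) * hqba + (-3:R) * hT1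
  have hT4 : ((-2:R)*U^2*V + (-2:R)*U*V*U + (-2:R)*V*U^2 + (1:R)*U^2*V^2 + (1:R)*U*V^2*U + (1:R)*V^2*U^2 : R) = 0 := by
    refine h3.mul_left_cancel ?_
    linear_combination (norm := (noncomm_ring; try simp; try norm_num)) (-1:R) * hqa1b + (-6:R) * hqab + (-1:R) * hqab2 * (V) + (3:R) * hqab * (V) + (1:R) * hqab1 + (1:R) * hqab2 + (-1:R) * (U) * hqa1b + (-2:R) * hU3 + (-1:R) * hU3 * (V) + (-1:R) * hU3 * (U) + (-1:R) * hU3 * (U*V) + (-1:R) * (U) * hV3 + (5:R) * hV3 * (V) + (2:R) * (V*U) * hV3 + (1:R) * (V^2*U) * hV3 + (1:R) * (U^2) * hV3 + (2:R) * (U) * hV3 * (V) + (2:R) * (U*V*U) * hV3 + (1:R) * (U) * hV3 * (V^2) + (1:R) * (U*V^2*U) * hV3 + (-2:R) * hV3 * (U*V) + (2:R) * hV3 * (U^2*V) + (1:R) * hV3 * (V*U*V) + (-1:R) * hV3 * (V*U^2*V) + (-4:R) * hV3 + (2:R) * hV3 * (U) + (-2:R) * hV3 * (U^2) + (-1:R)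 * hV3 * (V*U) + (1:R) * hV3 * (V*U^2) + (1:R) * hU3 * (U^2) + (1:R) * hU3 * (U^2*V) + (1:R) * hU3 * (V^2) + (-1:R) * hU3 * (V*U) + (-1:R) * hU3 * (V*U*V) + (1:R) * hU3 * (V*U^2) + (1:R) * hU3 * (V*U^2*V)
  have hT5 : ((-1:R)*U*V^2*U + (1:R)*V*U^2*V : R) = 0 := by
    refine h3.mul_left_cancel ?_
    linear_combination (norm := (noncomm_ring; try simp; try norm_num)) (-1:R) * hqab2 * (V) + (3:R) * hqab * (V) + (1:R) * hqab1 + (3:R) * hqa1b + (1:R) * hqab2 + (4:R) * (U) * hqa1b + (-1:R) * hqa2b + (1:R) * (U) * hqa2b + (-3:R) * (U) * hqab + (-1:R) * (U) * hV3 + (5:R) * hV3 * (V) + (2:R) * (V*U) * hV3 + (1:R) * (V^2*U) * hV3 + (1:R) * (U^2) * hV3 + (2:R) * (U) * hV3 * (V) + (2:R) * (U*V*U) * hV3 + (1:R) * (U) * hV3 * (V^2) + (1:R) * (U*V^2*U) * hV3 + (-2:R) * hV3 * (U*V) + (2:R) * hV3 * (U^2*V) + (1:R) * hV3 * (V*U*V)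 + (-1:R) * hV3 * (V*U^2*V) + (-4:R) * hV3 + (12:R) * hU3 + (5:R) * hU3 * (V) + (-1:R) * hU3 * (U) + (2:R) * hU3 * (U*V) + (2:R) * hV3 * (U) + (-2:R) * hV3 * (U^2) + (-1:R) * hV3 * (V*U) + (1:R) * hV3 * (V*U^2) + (-4:R) * hU3 * (U^2) + (-5:R) * hU3 * (U^2*V) + (-5:R) * hU3 * (V^2) + (2:R) * hU3 * (V*U) + (2:R) * hU3 * (V*U*V) + (-5:R) * hU3 * (V*U^2) + (-5:R) * hU3 * (V*U^2*V) + (-2:R) * (V) * hU3 + (1:R) * (V) * hU3 * (U) + (2:R) * (V^2) * hU3 + (-1:R) * (V^2) * hU3 * (U) + (2:R) * (U*V) * hU3 + (-1:R) * (U*V) * hU3 * (U) + (-2:R) * (U*V^2) * hU3 + (1:R) * (U*V^2) * hU3 * (U)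
  have hT6 : ((1:R)*U^2*V*U + (1:R)*U*V*U^2 : R) = 0 := by
    refine h3.mul_left_cancel ?_
    linear_combination (norm := (noncomm_ring; try simp; try norm_num)) (1:R) * (U) * hqab2 * (V) + (-1:R) * (U) * hqab1 + (-3:R) * (U) * hqab * (V) + (1:R) * hqa2b + (-3:R) * hqab + (-1:R) * hqa1b + (-1:R) * (U) * hqab2 + (3:R) * (U) * hqab + (-2:R) * (U) * hqba1 * (U) + (-2:R) * (U) * hqba1 + (1:R) * (U^2) * hV3 + (-5:R) * (U) * hV3 * (V) + (-2:R) * (U*V*U) * hV3 + (-1:R) * (U*V^2*U) * hV3 + (3:R) * hU3 * (V^2) + (-1:R) * hU3 * (V^3) + (-2:R) * (U^2) * hV3 * (V) + (-2:R) * (U^2*V*U) * hV3 + (-1:R) * (U^2) * hV3 * (V^2) + (-1:R) * (U^2*V^2*U) * hV3 + (2:R) * (U) * hV3 * (U*V) + (-2:R) * (U) * hV3 * (U^2*V) + (-1:R) * (U) * hV3 * (V*U*V) + (1:R) * (U) * hV3 * (V*U^2*V) + (4:R) * (U) * hV3 + (-6:R) * hU3 * (V) + (-8:R) * hU3 + (2:R)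 * (V) * hU3 + (-1:R) * (V) * hU3 * (U) + (-2:R) * (V^2) * hU3 + (1:R) * (V^2) * hU3 * (U) + (-3:R) * hU3 * (U) + (-2:R) * (U) * hV3 * (U) + (2:R) * (U) * hV3 * (U^2) + (1:R) * (U) * hV3 * (V*U) + (-1:R) * (U) * hV3 * (V*U^2) + (-2:R) * (U*V) * hU3 + (-2:R) * hU3 * (U^2) + (-2:R) * (U^2*V) * hU3 + (2:R) * hU3 * (U^3) + (2:R) * hU3 * (V*U^3) + (2:R) * (U*V^2) * hU3 + (-2:R) * (U*V) * hU3 * (U) + (-2:R) * (U*V*U*V) * hU3 + (2:R) * (U*V) * hU3 * (U^2) + (2:R) * (U*V*U^2*V) * hU3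
  have hT7 : ((1:R)*V*U*V^2 + (1:R)*V^2*U*V : R) = 0 := by
    refine h3.mul_left_cancel ?_
    linear_combination (norm := (noncomm_ring; try simp; try norm_num)) (1:R) * hqab2 + (-3:R) * hqab + (-1:R) * hqab1 + (2:R) * (U) * hqa1b * (V) + (-1:R) * hqa2b * (V) + (3:R) * hqab * (V) + (1:R) * hqa1b * (V) + (1:R) * (U) * hqa2b * (V) + (-3:R) * (U) * hqab * (V) + (-8:R) * hV3 + (-6:R) * (U) * hV3 + (2:R) * hV3 * (U) + (-2:R) * hV3 * (U^2) + (-1:R) * hV3 * (V*U) + (1:R) * hV3 * (V*U^2) + (1:R) * hV3 * (V) + (-3:R) * hU3 * (U*V) + (-2:R) * hU3 * (U^2*V) + (-3:R) * hU3 * (U^2*V^2) + (-3:R) * hU3 * (V^3) + (-3:R) * hU3 * (V*U^2*V) + (-3:R) * hU3 * (V*U^2*V^2) + (8:R) * hU3 * (V) + (-2:R) * (V) * hU3 * (V) + (1:R) * (V) * hU3 * (U*V) + (2:R) * (V^2) * hU3 * (V) + (-1:R) * (V^2) * hU3 * (U*V) + (2:R) * (U*V) * hU3 * (V) + (-1:R)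 * (U*V) * hU3 * (U*V) + (-2:R) * (U*V^2) * hU3 * (V) + (1:R) * (U*V^2) * hU3 * (U*V) + (3:R) * hU3 * (V^2) + (3:R) * (U^2) * hV3
  have hT8 : ((1:R)*U^2*V*U^2 : R) = 0 := by
    refine h3.mul_left_cancel ?_
    linear_combination (norm := (noncomm_ring; try simp; try norm_num)) (-3:R) * (U) * hT1 * (U) + (-3:R) * (U) * hqba1 * (U) + (-3:R) * (U) * hqba1 + (2:R) * (U) * hqa1b + (-3:R) * hqba + (3:R) * hqab * (U) + (3:R) * hqab + (-6:R) * (U) * hqab + (1:R) * (U) * hqa2b + (-5:R) * hU3 * (U^2) + (-3:R) * (U^2*V) * hU3 + (3:R) * hU3 * (U^3) + (3:R) * hU3 * (V*U^3) + (1:R) * (U*V^2) * hU3 + (-4:R) * (U*V) * hU3 * (U) + (-3:R) * (U*V*U*V) * hU3 + (3:R) * (U*V) * hU3 * (U^2) + (3:R) * (U*V*U^2*V) * hU3 + (-8:R) * hU3 * (U) + (3:R) * hU3 * (V) + (-3:R) * hU3 * (V*U) + (-4:R) * (U*V) * hU3 + (-3:R) * hU3 * (U^2*V) + (-3:R) *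 hU3 * (V^2) + (-3:R) * hU3 * (V*U^2) + (-3:R) * hU3 * (V*U^2*V) + (-3:R) * (V) * hU3 + (3:R) * (V^2) * hU3 + (1:R) * (U*V^2) * hU3 * (U)
  have hT9 : ((1:R)*V^2*U*V^2 : R) = 0 := by
    refine h3.mul_left_cancel ?_
    linear_combination (norm := (noncomm_ring; try simp; try norm_num)) (-2:R) * hqab1 + (1:R) * hqab2 * (V) + (-6:R) * hqab * (V) + (-2:R) * hqa1b + (3:R) * (V) * hT1 * (V) + (3:R) * hqa1b * (V) + (3:R) * (V) * hqab + (3:R) * (U) * hqa1b * (V) + (-2:R) * (U) * hqa1b + (-3:R) * hqba + (3:R) * hqab + (-4:R) * hV3 + (-4:R) * hV3 * (V) + (1:R) * (U) * hV3 + (-2:R) * (U) * hV3 * (V) + (-5:R) * (V*U) * hV3 + (-1:R) * (V^2*U) * hV3 + (-1:R) * (U^2) * hV3 + (-2:R) * (U*V*U) * hV3 + (-1:R) * (U) * hV3 * (V^2) + (-1:R) * (U*V^2*U) * hV3 + (-1:R) * hV3 * (U*V) + (-2:R) * hV3 * (U^2*V) + (-1:R) * hV3 * (V*U*V) + (1:R)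 * hV3 * (V*U^2*V) + (-4:R) * hU3 + (4:R) * hU3 * (V) + (-2:R) * hU3 * (U) + (1:R) * hU3 * (U*V) + (5:R) * hU3 * (V^2) + (3:R) * hU3 * (U*V^2) + (-3:R) * hV3 * (U) + (3:R) * hV3 * (U^2) + (-1:R) * hU3 * (U^2*V) + (-3:R) * hU3 * (U^2*V^2) + (-3:R) * hU3 * (V^3) + (1:R) * hU3 * (V*U*V) + (3:R) * hU3 * (V*U*V^2) + (-1:R) * hU3 * (V*U^2*V) + (-3:R) * hU3 * (V*U^2*V^2) + (2:R) * hU3 * (U^2) + (-2:R) * hU3 * (V*U) + (2:R) * hU3 * (V*U^2)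
  refine ⟨?_, ?_, ?_, ?_, ?_, ?_, ?_, ?_, ?_⟩
  · linear_combination (norm := (noncomm_ring; try simp; try norm_num)) hT1
  · linear_combination (norm := (noncomm_ring; try simp; try norm_num)) hT2
  · linear_combination (norm := (noncomm_ring; try simp; try norm_num)) hT3
  · linear_combination (norm := (noncomm_ring; try simp; try norm_num)) hT4
  · linear_combination (norm := (noncomm_ring; try simp; try norm_num)) hT5
  · linear_combination (norm := (noncomm_ring; try simp; try norm_num)) hT6
  · linear_combination (norm := (noncomm_ring; try simp; try norm_num)) hT7
  · linear_combination (norm := (noncomm_ring; try simp; try norm_num)) hT8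
  · linear_combination (norm := (noncomm_ring; try simp; try norm_num)) hT9
end
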